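/- arXiv:0904.2759 — 6 statements merged into one kernel-verified Lean document; each statement's English description precedes it below -/
import Mathlib

section
/- Let f : D → {0,1} with D ⊆ {0,1}^n, and for b ∈ {0,1} let F_b = {x ∈ D : f(x) = b}. Then for every cost vector s ∈ [0,∞)^n, the infimum over all span programs P on n variables with f_P(x) = f(x) for all x ∈ D of wsize_s(P, D) equals the infimum, over all m ∈ ℕ and all families of vectors v_{x,j} ∈ ℝ^m (for x ∈ D, j ∈ [n]) satisfying ∑_{j ∈ [n] : x_j ≠ y_j} ⟨v_{x,j}, v_{y,j}⟩ = 1 for every x ∈ F_0 and y ∈ F_1, of max_{x ∈ D} ∑_{j ∈ [n]} s_j ‖v_{x,j}‖². -/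
open scoped ComplexInnerProductSpace

/-- A span program on `n` boolean variables: an inner product space `ℂ^d`, a target vector,
and input vectors indexed by `Fin m`, each either free (`label i = none`) or labeled by a
pair `(j, b)` (`label i = some (j, b)`, meaning `i ∈ I_{j,b}`). -/
structure SpanProgram (n : ℕ) : Type where
  d : ℕ
  m : ℕ
  label : Fin m → Option (Fin n × Bool)
  target : EuclideanSpace ℂ (Fin d)
  input : Fin m → EuclideanSpace ℂ (Fin d)

namespace SpanProgram

variable {n : ℕ}

/-- Input vector `i` is available on input `x`: it is free, or labeled `(j, x_j)` for some `j`. -/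
def avail (P : SpanProgram n) (x : Fin n → Bool) (i : Fin P.m) : Prop :=
  P.label i = none ∨ ∃ j : Fin n, P.label i = some (j, x j)

instance (P : SpanProgram n) (x : Fin n → Bool) (i : Fin P.m) : Decidable (P.avail x i) :=
  inferInstanceAs (Decidable (P.label i = none ∨ ∃ j : Fin n, P.label i = some (j, x j)))

/-- The boolean function computed by `P`:  `f_P(x) = 1` iff the target is in the range of
`A ∘ Π(x)`, i.e. the target is a linear combination of the available input vectors. -/
def eval (P : SpanProgram n) (x : Fin n → Bool) : Prop :=
  ∃ w : Fin P.m → ℂ, ∑ i, (if P.avail x i then w i else 0) • P.input i = P.target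

/-- The squared cost weight of coordinate `i`:  `s j` if `i ∈ I_{j,b}`, and `0` if `i` is free.
Thus `‖S w‖² = ∑ i, P.cw s i * ‖w i‖²`. -/
def cw (P : SpanProgram n) (s : Fin n → ℝ) (i : Fin P.m) : ℝ :=
  match P.label i with
  | none => 0
  | some jb => s jb.1

open Classical in
/-- The witness size of `P` on input `x` with costs `s`. -/
noncomputable def wsizex (P : SpanProgram n) (s : Fin n → ℝ) (x : Fin n → Bool) : ℝ :=
  if P.eval x then
    sInf { r : ℝ | ∃ w : Fin P.m → ℂ,
      (∑ i, (if P.avail x i then w i else 0) • P.input i = P.target) ∧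
      r = ∑ i, P.cw s i * ‖w i‖ ^ 2 }
  else
    sInf { r : ℝ | ∃ w' : EuclideanSpace ℂ (Fin P.d), ⟪P.target, w'⟫ = 1 ∧
      (∀ i, P.avail x i → ⟪P.input i, w'⟫ = 0) ∧
      r = ∑ i, P.cw s i * ‖⟪P.input i, w'⟫‖ ^ 2 }

/-- The witness size of `P` with costs `s`, restricted to the domain `D`:
`max_{x ∈ D} wsize_s(P, x)`. -/
noncomputable def wsizeD (P : SpanProgram n) (s : Fin n → ℝ) (D : Set (Fin n → Bool)) : ℝ :=
  sSup { r : ℝ | ∃ x ∈ D, r = P.wsizex s x }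

end SpanProgram

namespace SPaux


variable {n : ℕ}

lemma cw_nonneg (P : SpanProgram n) {s : Fin n → ℝ} (hs : ∀ j, 0 ≤ s j) (i : Fin P.m) :
    0 ≤ P.cw s i := by
  unfold SpanProgram.cw
  cases P.label i with
  | none => simp
  | some jb => exact hs jb.1

lemma wsizex_nonneg (P : SpanProgram n) {s : Fin n → ℝ} (hs : ∀ j, 0 ≤ s j)
    (x : Fin n → Bool) : 0 ≤ P.wsizex s x := by
  unfold SpanProgram.wsizex
  split
  · refine Real.sInf_nonneg ?_
    rintro r ⟨w, -, rfl⟩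
    exact Finset.sum_nonneg fun i _ => mul_nonneg (cw_nonneg P hs i) (by positivity)
  · refine Real.sInf_nonneg ?_
    rintro r ⟨w', -, -, rfl⟩
    exact Finset.sum_nonneg fun i _ => mul_nonneg (cw_nonneg P hs i) (by positivity)

lemma wsizeD_nonneg (P : SpanProgram n) {s : Fin n → ℝ} (hs : ∀ j, 0 ≤ s j)
    (D : Set (Fin n → Bool)) : 0 ≤ P.wsizeD s D := by
  refine Real.sSup_nonneg ?_
  rintro r ⟨x, -, rfl⟩
  exact wsizex_nonneg P hs x

lemma euclid_inner {M : ℕ} (a b : EuclideanSpace ℝ (Fin M)) :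
    (inner ℝ a b : ℝ) = ∑ k, a k * b k := by
  simp [PiLp.inner_apply, RCLike.inner_apply, mul_comm]

lemma euclid_norm_sq {M : ℕ} (a : EuclideanSpace ℝ (Fin M)) :
    ‖a‖ ^ 2 = ∑ k, a k ^ 2 := by
  rw [EuclideanSpace.norm_eq, Real.sq_sqrt (by positivity)]
  simp [Real.norm_eq_abs, sq_abs]

open Classical in
lemma sum_option_label {β : Type*} [AddCommMonoid β] (o : Option (Fin n × Bool))
    (q : Fin n → Bool) (F : Fin n → β) (A : Finset (Fin n)) :
    ∑ j ∈ A, (if o = some (j, q j) then F j else 0)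
      = o.elim 0 (fun jb => if jb.1 ∈ A ∧ jb.2 = q jb.1 then F jb.1 else 0) := by
  cases o with
  | none => simp
  | some jb =>
    obtain ⟨j0, b⟩ := jb
    simp only [Option.elim]
    by_cases hmem : j0 ∈ A
    · rw [Finset.sum_eq_single j0 (fun j _ hne => by
        rw [if_neg]; simp only [Option.some_inj, Prod.mk.injEq, not_and]
        intro h; exact absurd h.symm hne) (fun h => absurd hmem h)]
      by_cases hb : b = q j0
      · simp [hb, hmem]
      · rw [if_neg (by simp [Prod.ext_iff, hb]), if_neg (by simp [hb])]
    · rw [if_neg (by simp [hmem]), Finset.sum_eq_zero]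
      intro j hj
      rw [if_neg]
      simp only [Option.some_inj, Prod.mk.injEq, not_and]
      intro h; exact absurd (h ▸ hj) hmem

end SPaux

namespace SPaux


noncomputable def cvec {M : ℕ} (a : Fin M → ℂ) : EuclideanSpace ℝ (Fin (M * 2)) :=
  WithLp.toLp 2 (fun k => if (finProdFinEquiv.symm k).2 = 0 then (a (finProdFinEquiv.symm k).1).re
           else (a (finProdFinEquiv.symm k).1).im)

lemma euclid_inner' {M : ℕ} (a b : EuclideanSpace ℝ (Fin M)) :
    (inner ℝ a b : ℝ) = ∑ k, a k * b k := by
  simp [PiLp.inner_apply, RCLike.inner_apply, mul_comm]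

lemma inner_cvec {M : ℕ} (a b : Fin M → ℂ) :
    (inner ℝ (cvec a) (cvec b) : ℝ) = (∑ i, (starRingEnd ℂ) (a i) * b i).re := by
  rw [euclid_inner']
  rw [← Equiv.sum_comp (finProdFinEquiv : Fin M × Fin 2 ≃ Fin (M * 2))
    (fun k => cvec a k * cvec b k)]
  rw [Complex.re_sum, Fintype.sum_prod_type]
  refine Finset.sum_congr rfl fun i _ => ?_
  rw [Fin.sum_univ_two]
  simp only [cvec, PiLp.toLp_apply, Equiv.symm_apply_apply, Complex.mul_re]
  norm_num

lemma norm_cvec_sq {M : ℕ} (a : Fin M → ℂ) :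
    ‖cvec a‖ ^ 2 = ∑ i, ‖a i‖ ^ 2 := by
  have h := inner_cvec a a
  rw [real_inner_self_eq_norm_sq] at h
  rw [h, Complex.re_sum]
  refine Finset.sum_congr rfl fun i _ => ?_
  rw [Complex.sq_norm]
  simp [Complex.normSq_apply, Complex.mul_re]

end SPaux

namespace SPaux
variable {n : ℕ}

lemma exists_dual (P : SpanProgram n) {x : Fin n → Bool} (h : ¬ P.eval x) :
    ∃ w' : EuclideanSpace ℂ (Fin P.d), ⟪P.target, w'⟫ = 1 ∧
      ∀ i, P.avail x i → ⟪P.input i, w'⟫ = 0 := by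
  classical
  set K : Submodule ℂ (EuclideanSpace ℂ (Fin P.d)) :=
    Submodule.span ℂ (Set.range (fun i : {i : Fin P.m // P.avail x i} => P.input i.1)) with hK
  have htK : P.target ∉ K := by
    intro ht
    rw [hK, Submodule.mem_span_range_iff_exists_fun] at ht
    obtain ⟨c, hc⟩ := ht
    refine h ⟨fun i => if hi : P.avail x i then c ⟨i, hi⟩ else 0, ?_⟩
    rw [← hc]
    have h1 : ∀ i : Fin P.m,
        (if P.avail x i then (if hi : P.avail x i then c ⟨i, hi⟩ else 0) else 0) • P.input i
        = if P.avail x i then (if hi : P.avail x i then c ⟨i, hi⟩ else 0) • P.input i else 0 :=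
      fun i => by split <;> simp
    simp_rw [h1]
    rw [← Finset.sum_filter]
    rw [Finset.sum_subtype (Finset.univ.filter (P.avail x)) (p := P.avail x) (by simp)
      (fun i => (if hi : P.avail x i then c ⟨i, hi⟩ else 0) • P.input i)]
    exact Finset.sum_congr rfl fun i _ => by rw [dif_pos i.2]
  set u := P.target - (K.orthogonalProjectionOnto P.target : EuclideanSpace ℂ (Fin P.d)) with hu
  have huK : u ∈ Kᗮ := K.sub_starProjection_mem_orthogonal P.target
  have hune : u ≠ 0 := by
    intro h0
    exact htK (by rw [show P.target = (K.orthogonalProjectionOnto P.target : EuclideanSpace ℂ (Fin P.d)) from by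
      rw [← sub_eq_zero]; exact h0]; exact Submodule.coe_mem _)
  have hnorm : (‖u‖ : ℂ) ^ 2 ≠ 0 := by
    simp only [ne_eq, pow_eq_zero_iff, Complex.ofReal_eq_zero, norm_eq_zero]
    simpa using hune
  refine ⟨((‖u‖ : ℂ) ^ 2)⁻¹ • u, ?_, ?_⟩
  · rw [inner_smul_right]
    have htu : ⟪P.target, u⟫ = (‖u‖ : ℂ) ^ 2 := by
      have h2 : P.target = u + (K.orthogonalProjectionOnto P.target : EuclideanSpace ℂ (Fin P.d)) := by
        rw [hu, sub_add_cancel]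
      rw [h2, inner_add_left]
      rw [(Submodule.mem_orthogonal K u).mp huK _ (Submodule.coe_mem _)]
      rw [inner_self_eq_norm_sq_to_K, add_zero]
      norm_cast
    rw [htu]
    exact inv_mul_cancel₀ hnorm
  · intro i hi
    rw [inner_smul_right]
    have : P.input i ∈ K := Submodule.subset_span ⟨⟨i, hi⟩, rfl⟩
    rw [(Submodule.mem_orthogonal K u).mp huK _ this, mul_zero]

end SPaux

namespace SPaux
variable {n : ℕ}

def eI (n m : ℕ) : (Fin n × Bool × Fin m) ≃ Fin (n * (2 * m)) :=
  (Equiv.prodCongr (Equiv.refl (Fin n))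
    ((Equiv.prodCongr finTwoEquiv.symm (Equiv.refl (Fin m))).trans finProdFinEquiv)).trans
    finProdFinEquiv

lemma sum_triple {m : ℕ} {β : Type*} [AddCommMonoid β] (g : Fin (n * (2 * m)) → β) :
    ∑ i, g i = ∑ j : Fin n, ∑ b : Bool, ∑ k : Fin m, g (eI n m (j, b, k)) := by
  rw [← Equiv.sum_comp (eI n m) g, Fintype.sum_prod_type]
  exact Finset.sum_congr rfl fun j _ => Fintype.sum_prod_type _

lemma bool_prod_sum (bx by_ : Bool) (u w : ℂ) :
    (if true = by_ then u else 0) * (if bx ≠ true then w else 0) +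
      (if false = by_ then u else 0) * (if bx ≠ false then w else 0) =
      if bx ≠ by_ then u * w else 0 := by
  cases bx <;> cases by_ <;> simp

lemma bool_pick (by_ : Bool) (a : ℝ) :
    (if true = by_ then a else 0) + (if false = by_ then a else 0) = a := by
  cases by_ <;> simp

lemma bool_pick2 (bx : Bool) (a : ℝ) :
    (if bx ≠ true then a else 0) + (if bx ≠ false then a else 0) = a := by
  cases bx <;> simp

lemma norm_real_sq (r : ℝ) : ‖(r : ℂ)‖ ^ 2 = r ^ 2 := by
  rw [Complex.norm_real, Real.norm_eq_abs, sq_abs]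

variable (D : Finset (Fin n → Bool)) (f : {x // x ∈ D} → Bool)
  {m : ℕ} (V : {x // x ∈ D} → Fin n → Fin m → ℝ)

noncomputable def eX : {x // x ∈ D} ≃ Fin (Fintype.card {x // x ∈ D}) := Fintype.equivFin _

noncomputable def mkSP : SpanProgram n where
  d := Fintype.card {x // x ∈ D}
  m := n * (2 * m)
  label := fun i => some (((eI n m).symm i).1, ((eI n m).symm i).2.1)
  target := WithLp.toLp 2 (fun z => if f ((eX D).symm z) = false then 1 else 0)
  input := fun i => WithLp.toLp 2 (fun z =>
    if f ((eX D).symm z) = false ∧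
        ((eX D).symm z).1 (((eI n m).symm i).1) ≠ ((eI n m).symm i).2.1
    then ((V ((eX D).symm z) (((eI n m).symm i).1) (((eI n m).symm i).2.2) : ℝ) : ℂ) else 0)

lemma mkSP_avail (x : Fin n → Bool) (i : Fin (mkSP D f V).m) :
    (mkSP D f V).avail x i ↔ ((eI n m).symm i).2.1 = x (((eI n m).symm i).1) := by
  unfold SpanProgram.avail mkSP
  simp only [Option.some_inj, Prod.mk.injEq, reduceCtorEq, false_or]
  constructor
  · rintro ⟨j, hj, hb⟩; rw [hb, hj]
  · intro hb; exact ⟨_, rfl, hb⟩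

lemma mkSP_eval_true
    (hcon : ∀ x y : {x // x ∈ D}, f x = false → f y = true →
      ∑ j ∈ Finset.univ.filter (fun j : Fin n => x.1 j ≠ y.1 j),
        (∑ k : Fin m, V x j k * V y j k) = 1)
    (y : {x // x ∈ D}) (hy : f y = true) : (mkSP D f V).eval y.1 := by
  classical
  refine ⟨fun i => if ((eI n m).symm i).2.1 = y.1 (((eI n m).symm i).1)
    then ((V y (((eI n m).symm i).1) (((eI n m).symm i).2.2) : ℝ) : ℂ) else 0, ?_⟩
  have hite : ∀ i : Fin (mkSP D f V).m,
      (if (mkSP D f V).avail y.1 i then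
        (if ((eI n m).symm i).2.1 = y.1 (((eI n m).symm i).1)
          then ((V y (((eI n m).symm i).1) (((eI n m).symm i).2.2) : ℝ) : ℂ) else 0) else 0)
      = (if ((eI n m).symm i).2.1 = y.1 (((eI n m).symm i).1)
          then ((V y (((eI n m).symm i).1) (((eI n m).symm i).2.2) : ℝ) : ℂ) else 0) := by
    intro i
    by_cases h : (mkSP D f V).avail y.1 i
    · rw [if_pos h]
    · rw [if_neg h, if_neg]
      rw [mkSP_avail] at h; exact h
  simp_rw [hite]
  refine PiLp.ext fun z => ?_
  rw [WithLp.ofLp_sum, Finset.sum_apply z Finset.univ _]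
  show ∑ i : Fin (n * (2 * m)),
      (if ((eI n m).symm i).2.1 = y.1 (((eI n m).symm i).1)
        then ((V y (((eI n m).symm i).1) (((eI n m).symm i).2.2) : ℝ) : ℂ) else 0) *
      (mkSP D f V).input i z = (mkSP D f V).target z
  unfold mkSP
  dsimp only
  rw [sum_triple]
  simp only [Equiv.symm_apply_apply]
  set xz := (eX D).symm z with hxz
  by_cases hz : f xz = false
  · simp only [hz, eq_self_iff_true, true_and, if_true]
    simp only [Fintype.sum_bool]
    simp only [← Finset.sum_add_distrib]
    simp only [bool_prod_sum]
    simp only [Finset.sum_ite_irrel, Finset.sum_const_zero]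
    rw [← Finset.sum_filter]
    have hc := hcon xz y hz hy
    have hc2 : ∑ j ∈ Finset.univ.filter (fun j : Fin n => xz.1 j ≠ y.1 j),
        (∑ k : Fin m, V y j k * V xz j k) = 1 := by
      rw [← hc]
      exact Finset.sum_congr rfl fun j _ =>
        Finset.sum_congr rfl fun k _ => mul_comm _ _
    exact_mod_cast hc2
  · rw [if_neg hz]
    refine Finset.sum_eq_zero fun j _ => Finset.sum_eq_zero fun b _ => ?_
    refine Finset.sum_eq_zero fun k _ => ?_
    have hcond : ¬(f xz = false ∧ xz.1 j ≠ b) := fun hc => hz hc.1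
    rw [if_neg hcond, mul_zero]

lemma mkSP_eval_false (x : {x // x ∈ D}) (hx : f x = false) :
    ¬ (mkSP D f V).eval x.1 := by
  rintro ⟨w, hw⟩
  have h0 := congrFun (congrArg WithLp.ofLp hw) (eX D x)
  rw [WithLp.ofLp_sum] at h0; erw [Finset.sum_apply _ Finset.univ _] at h0
  have hL : ∑ i, ((if (mkSP D f V).avail x.1 i then w i else 0) • (mkSP D f V).input i)
      (eX D x) = 0 := by
    refine Finset.sum_eq_zero fun i _ => ?_
    show (if (mkSP D f V).avail x.1 i then w i else 0) * (mkSP D f V).input i (eX D x) = 0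
    by_cases hav : (mkSP D f V).avail x.1 i
    · rw [if_pos hav]
      have hb := (mkSP_avail D f V x.1 i).mp hav
      have : (mkSP D f V).input i (eX D x) = 0 := by
        unfold mkSP
        dsimp only
        rw [if_neg]
        simp only [Equiv.symm_apply_apply]
        rintro ⟨-, hne⟩
        exact hne hb.symm
      rw [this, mul_zero]
    · rw [if_neg hav, zero_mul]
  rw [hL] at h0
  have hT : (mkSP D f V).target (eX D x) = 1 := by
    unfold mkSP
    dsimp only
    simp only [Equiv.symm_apply_apply]
    rw [if_pos hx]
  rw [hT] at h0
  exact zero_ne_one h0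

end SPaux

namespace SPaux
variable {n : ℕ} (D : Finset (Fin n → Bool)) (f : {x // x ∈ D} → Bool)
  {m : ℕ} (V : {x // x ∈ D} → Fin n → Fin m → ℝ)

lemma norm_ite_sq (p : Prop) [Decidable p] (u : ℂ) :
    ‖(if p then u else 0)‖ ^ 2 = if p then ‖u‖ ^ 2 else 0 := by split <;> simp

lemma mkSP_wsizex_le (s : Fin n → ℝ) (hs : ∀ j, 0 ≤ s j)
    (hcon : ∀ x y : {x // x ∈ D}, f x = false → f y = true →
      ∑ j ∈ Finset.univ.filter (fun j : Fin n => x.1 j ≠ y.1 j),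
        (∑ k : Fin m, V x j k * V y j k) = 1)
    (x : {x // x ∈ D}) :
    (mkSP D f V).wsizex s x.1 ≤ ∑ j : Fin n, s j * ∑ k : Fin m, (V x j k) ^ 2 := by
  classical
  have hbdd : ∀ (S : Set ℝ), (∀ r ∈ S, 0 ≤ r) → BddBelow S := fun S h => ⟨0, h⟩
  by_cases hfx : f x = true
  · have he : (mkSP D f V).eval x.1 := mkSP_eval_true D f V hcon x hfx
    unfold SpanProgram.wsizex
    rw [if_pos he]
    refine csInf_le (hbdd _ ?_) ?_
    · rintro r ⟨w, -, rfl⟩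
      exact Finset.sum_nonneg fun i _ => mul_nonneg (cw_nonneg _ hs i) (by positivity)
    · obtain ⟨w, hw⟩ := he
      refine ⟨fun i => if ((eI n m).symm i).2.1 = x.1 (((eI n m).symm i).1)
        then ((V x (((eI n m).symm i).1) (((eI n m).symm i).2.2) : ℝ) : ℂ) else 0, ?_, ?_⟩
      · -- same witness as in mkSP_eval_true
        have hite : ∀ i : Fin (mkSP D f V).m,
            (if (mkSP D f V).avail x.1 i then
              (if ((eI n m).symm i).2.1 = x.1 (((eI n m).symm i).1)
                then ((V x (((eI n m).symm i).1) (((eI n m).symm i).2.2) : ℝ) : ℂ) else 0) else 0)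
            = (if ((eI n m).symm i).2.1 = x.1 (((eI n m).symm i).1)
                then ((V x (((eI n m).symm i).1) (((eI n m).symm i).2.2) : ℝ) : ℂ) else 0) := by
          intro i
          by_cases h : (mkSP D f V).avail x.1 i
          · rw [if_pos h]
          · rw [if_neg h, if_neg]
            rw [mkSP_avail] at h; exact h
        simp_rw [hite]
        -- reuse the eval_true computation
        obtain ⟨w', hw'⟩ := mkSP_eval_true D f V hcon x hfx
        -- we cannot reuse w'; instead redo the funext computation
        refine PiLp.ext fun z => ?_
        rw [WithLp.ofLp_sum, Finset.sum_apply z Finset.univ _]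
        show ∑ i : Fin (n * (2 * m)),
            (if ((eI n m).symm i).2.1 = x.1 (((eI n m).symm i).1)
              then ((V x (((eI n m).symm i).1) (((eI n m).symm i).2.2) : ℝ) : ℂ) else 0) *
            (mkSP D f V).input i z = (mkSP D f V).target z
        unfold mkSP
        dsimp only
        rw [sum_triple]
        simp only [Equiv.symm_apply_apply]
        set xz := (eX D).symm z with hxz
        by_cases hz : f xz = false
        · simp only [hz, eq_self_iff_true, true_and, if_true]
          simp only [Fintype.sum_bool]
          simp only [← Finset.sum_add_distrib]
          simp only [bool_prod_sum]
          simp only [Finset.sum_ite_irrel, Finset.sum_const_zero]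
          rw [← Finset.sum_filter]
          have hc := hcon xz x hz hfx
          have hc2 : ∑ j ∈ Finset.univ.filter (fun j : Fin n => xz.1 j ≠ x.1 j),
              (∑ k : Fin m, V x j k * V xz j k) = 1 := by
            rw [← hc]
            exact Finset.sum_congr rfl fun j _ =>
              Finset.sum_congr rfl fun k _ => mul_comm _ _
          exact_mod_cast hc2
        · rw [if_neg hz]
          refine Finset.sum_eq_zero fun j _ => Finset.sum_eq_zero fun b _ => ?_
          refine Finset.sum_eq_zero fun k _ => ?_
          have hcond : ¬(f xz = false ∧ xz.1 j ≠ b) := fun hc => hz hc.1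
          rw [if_neg hcond, mul_zero]
      · -- cost computation
        show (∑ j : Fin n, s j * ∑ k : Fin m, (V x j k) ^ 2) = _
        rw [show (∑ i, (mkSP D f V).cw s i *
            ‖(if ((eI n m).symm i).2.1 = x.1 (((eI n m).symm i).1)
              then ((V x (((eI n m).symm i).1) (((eI n m).symm i).2.2) : ℝ) : ℂ) else 0)‖ ^ 2)
            = ∑ i : Fin (n * (2 * m)), s (((eI n m).symm i).1) *
            ‖(if ((eI n m).symm i).2.1 = x.1 (((eI n m).symm i).1)
              then ((V x (((eI n m).symm i).1) (((eI n m).symm i).2.2) : ℝ) : ℂ) else 0)‖ ^ 2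
          from rfl]
        rw [sum_triple]
        simp only [Equiv.symm_apply_apply, norm_ite_sq, norm_real_sq, mul_ite, mul_zero]
        simp only [Fintype.sum_bool]
        simp only [← Finset.sum_add_distrib]
        simp only [bool_pick]
        simp only [← Finset.mul_sum]
  · have hfx' : f x = false := by
      cases h : f x
      · rfl
      · exact absurd h hfx
    have hne : ¬ (mkSP D f V).eval x.1 := mkSP_eval_false D f V x hfx'
    unfold SpanProgram.wsizex
    rw [if_neg hne]
    refine csInf_le (hbdd _ ?_) ?_
    · rintro r ⟨w', -, -, rfl⟩
      exact Finset.sum_nonneg fun i _ => mul_nonneg (cw_nonneg _ hs i) (by positivity)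
    · have hinp : ∀ i : Fin (mkSP D f V).m,
          ⟪(mkSP D f V).input i, EuclideanSpace.single (eX D x) (1:ℂ)⟫
          = (starRingEnd ℂ) ((mkSP D f V).input i (eX D x)) := by
        intro i
        erw [EuclideanSpace.inner_single_right]; rw [one_mul]
      refine ⟨EuclideanSpace.single (eX D x) (1:ℂ), ?_, ?_, ?_⟩
      · erw [EuclideanSpace.inner_single_right]; rw [one_mul]
        have hT : (mkSP D f V).target (eX D x) = 1 := by
          unfold mkSP
          dsimp only
          simp only [Equiv.symm_apply_apply]
          rw [if_pos hfx']
        rw [hT, map_one]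
      · intro i hav
        rw [hinp i]
        have hb := (mkSP_avail D f V x.1 i).mp hav
        have h0 : (mkSP D f V).input i (eX D x) = 0 := by
          unfold mkSP
          dsimp only
          rw [if_neg]
          simp only [Equiv.symm_apply_apply]
          rintro ⟨-, hne2⟩
          exact hne2 hb.symm
        rw [h0, map_zero]
      · simp only [hinp, RCLike.norm_conj]
        show (∑ j : Fin n, s j * ∑ k : Fin m, (V x j k) ^ 2) = _
        rw [show (∑ i, (mkSP D f V).cw s i * ‖(mkSP D f V).input i (eX D x)‖ ^ 2)
            = ∑ i : Fin (n * (2 * m)), s (((eI n m).symm i).1) *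
              ‖(mkSP D f V).input i (eX D x)‖ ^ 2 from rfl]
        have hinp2 : ∀ i : Fin (n * (2 * m)), (mkSP D f V).input i (eX D x)
            = if x.1 (((eI n m).symm i).1) ≠ ((eI n m).symm i).2.1
              then ((V x (((eI n m).symm i).1) (((eI n m).symm i).2.2) : ℝ) : ℂ) else 0 := by
          intro i
          show (if f ((eX D).symm (eX D x)) = false ∧ _ then _ else 0) = _
          simp only [Equiv.symm_apply_apply, hfx', eq_self_iff_true, true_and]
        simp only [hinp2]
        rw [sum_triple]
        simp only [Equiv.symm_apply_apply, norm_ite_sq, norm_real_sq, mul_ite, mul_zero]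
        simp only [Fintype.sum_bool]
        simp only [← Finset.sum_add_distrib]
        simp only [bool_pick2]
        simp only [← Finset.mul_sum]

end SPaux

namespace SPaux
variable {n : ℕ}

lemma wsizex_le_wsizeD (P : SpanProgram n) (s : Fin n → ℝ) {D : Finset (Fin n → Bool)}
    {x : Fin n → Bool} (hx : x ∈ D) : P.wsizex s x ≤ P.wsizeD s ↑D := by
  have hset : {r : ℝ | ∃ y ∈ (↑D : Set (Fin n → Bool)), r = P.wsizex s y}
      = (fun y => P.wsizex s y) '' ↑D := by
    ext r; simp [eq_comm]
  refine le_csSup ?_ ⟨x, hx, rfl⟩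
  rw [show {r : ℝ | ∃ y ∈ (↑D : Set (Fin n → Bool)), r = P.wsizex s y}
    = (fun y => P.wsizex s y) '' ↑D from hset]
  exact (D.finite_toSet.image _).bddAbove

lemma dir1 (D : Finset (Fin n → Bool)) (f : {x // x ∈ D} → Bool)
    (s : Fin n → ℝ) (hs : ∀ j, 0 ≤ s j) (P : SpanProgram n)
    (hP : ∀ x : {x // x ∈ D}, (P.eval x.1 ↔ f x = true)) {ε : ℝ} (hε : 0 < ε) :
    ∃ (M : ℕ) (vv : {x // x ∈ D} → Fin n → EuclideanSpace ℝ (Fin M)),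
      (∀ x y : {x // x ∈ D}, f x = false → f y = true →
        ∑ j ∈ Finset.univ.filter (fun j : Fin n => x.1 j ≠ y.1 j),
          (inner ℝ (vv x j) (vv y j) : ℝ) = 1) ∧
      (⨆ x : {x // x ∈ D}, ∑ j : Fin n, s j * ‖vv x j‖ ^ 2) ≤ P.wsizeD s ↑D + ε := by
  classical
  have hchoice : ∀ x : {x // x ∈ D}, ∃ c : Fin P.m → ℂ,
      (f x = true → ∑ i, (if P.avail x.1 i then c i else 0) • P.input i = P.target) ∧
      (f x = false → (∃ w' : EuclideanSpace ℂ (Fin P.d), (∀ i, c i = ⟪P.input i, w'⟫) ∧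
          ⟪P.target, w'⟫ = 1) ∧ (∀ i, P.avail x.1 i → c i = 0)) ∧
      (∑ i, P.cw s i * ‖c i‖ ^ 2) < P.wsizex s x.1 + ε := by
    intro x
    by_cases hfx : f x = true
    · have he : P.eval x.1 := (hP x).mpr hfx
      have hwsx : P.wsizex s x.1 = sInf { r : ℝ | ∃ w : Fin P.m → ℂ,
          (∑ i, (if P.avail x.1 i then w i else 0) • P.input i = P.target) ∧
          r = ∑ i, P.cw s i * ‖w i‖ ^ 2 } := by
        unfold SpanProgram.wsizex
        rw [if_pos he]
      have hSne : { r : ℝ | ∃ w : Fin P.m → ℂ,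
          (∑ i, (if P.avail x.1 i then w i else 0) • P.input i = P.target) ∧
          r = ∑ i, P.cw s i * ‖w i‖ ^ 2 }.Nonempty := by
        obtain ⟨w, hw⟩ := he
        exact ⟨_, w, hw, rfl⟩
      obtain ⟨a, ⟨w, hw, rfl⟩, ha⟩ := Real.lt_sInf_add_pos hSne hε
      exact ⟨w, fun _ => hw, fun hf => by rw [hf] at hfx; exact (Bool.false_ne_true hfx).elim,
        by rw [hwsx]; exact ha⟩
    · have hfx' : f x = false := by
        cases h : f x
        · rfl
        · exact absurd h hfx
      have hne : ¬ P.eval x.1 := fun he => hfx ((hP x).mp he)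
      have hwsx : P.wsizex s x.1 = sInf { r : ℝ | ∃ w' : EuclideanSpace ℂ (Fin P.d),
          ⟪P.target, w'⟫ = 1 ∧ (∀ i, P.avail x.1 i → ⟪P.input i, w'⟫ = 0) ∧
          r = ∑ i, P.cw s i * ‖⟪P.input i, w'⟫‖ ^ 2 } := by
        unfold SpanProgram.wsizex
        rw [if_neg hne]
      have hSne : { r : ℝ | ∃ w' : EuclideanSpace ℂ (Fin P.d),
          ⟪P.target, w'⟫ = 1 ∧ (∀ i, P.avail x.1 i → ⟪P.input i, w'⟫ = 0) ∧
          r = ∑ i, P.cw s i * ‖⟪P.input i, w'⟫‖ ^ 2 }.Nonempty := by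
        obtain ⟨w0, h1, h2⟩ := exists_dual P hne
        exact ⟨_, w0, h1, h2, rfl⟩
      obtain ⟨a, ⟨w', hw1, hw2, rfl⟩, ha⟩ := Real.lt_sInf_add_pos hSne hε
      refine ⟨fun i => ⟪P.input i, w'⟫, fun hf => absurd hf hfx,
        fun _ => ⟨⟨w', fun i => rfl, hw1⟩, hw2⟩, by rw [hwsx]; exact ha⟩
  choose c hwit hdual hcost using hchoice
  refine ⟨P.m * 2, fun x j => cvec (fun i =>
      if P.label i = some (j, if f x = true then x.1 j else !(x.1 j)) then c x i else 0),
    ?_, ?_⟩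
  · -- the SDP constraint
    intro x y hx hy
    obtain ⟨⟨w', hcw, htw⟩, hcz⟩ := hdual x hx
    have hwy := hwit y hy
    have hxf : (f x = true) = False := by simp [hx]
    have hyf : (f y = true) = True := by simp [hy]
    simp only [inner_cvec, hxf, hyf, if_true, if_false]
    rw [← Complex.re_sum]
    have key : ∑ j ∈ Finset.univ.filter (fun j : Fin n => x.1 j ≠ y.1 j),
        ∑ i : Fin P.m, (starRingEnd ℂ)
          (if P.label i = some (j, !(x.1 j)) then c x i else 0) *
          (if P.label i = some (j, y.1 j) then c y i else 0) = 1 := by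
      have step1 : ∑ j ∈ Finset.univ.filter (fun j : Fin n => x.1 j ≠ y.1 j),
          ∑ i : Fin P.m, (starRingEnd ℂ)
            (if P.label i = some (j, !(x.1 j)) then c x i else 0) *
            (if P.label i = some (j, y.1 j) then c y i else 0)
          = ∑ j ∈ Finset.univ.filter (fun j : Fin n => x.1 j ≠ y.1 j),
            ∑ i : Fin P.m,
            (if P.label i = some (j, y.1 j) then (starRingEnd ℂ) (c x i) * c y i else 0) := by
        refine Finset.sum_congr rfl fun j hj => ?_
        have hj2 : x.1 j ≠ y.1 j := (Finset.mem_filter.mp hj).2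
        have hb : (!(x.1 j)) = y.1 j := by
          revert hj2; cases x.1 j <;> cases y.1 j <;> simp
        rw [hb]
        refine Finset.sum_congr rfl fun i _ => ?_
        by_cases hp : P.label i = some (j, y.1 j) <;> simp [hp]
      rw [step1, Finset.sum_comm]
      have step3 : ∀ i : Fin P.m,
          ∑ j ∈ Finset.univ.filter (fun j : Fin n => x.1 j ≠ y.1 j),
            (if P.label i = some (j, y.1 j) then (starRingEnd ℂ) (c x i) * c y i else 0)
          = (starRingEnd ℂ) (c x i) * (if P.avail y.1 i then c y i else 0) := by
        intro i
        rw [sum_option_label (P.label i) (fun j => y.1 j)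
          (fun _ => (starRingEnd ℂ) (c x i) * c y i) _]
        cases hlab : P.label i with
        | none =>
          have havx : P.avail x.1 i := Or.inl hlab
          rw [hcz i havx]
          simp
        | some jb =>
          obtain ⟨j0, b⟩ := jb
          simp only [Option.elim]
          have havy : P.avail y.1 i ↔ b = y.1 j0 := by
            constructor
            · rintro (h | ⟨j, hj⟩)
              · rw [h] at hlab; cases hlab
              · rw [hj] at hlab
                have := Option.some_inj.mp hlab
                rw [Prod.mk.injEq] at this
                rw [this.1] at this
                exact (this.2).symm ▸ rfl
            · intro hb; exact Or.inr ⟨j0, by rw [hlab, hb]⟩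
          by_cases hb : b = y.1 j0
          · rw [if_pos (havy.mpr hb)]
            by_cases hxy : x.1 j0 = y.1 j0
            · have havx : P.avail x.1 i := Or.inr ⟨j0, by rw [hlab, hb, ← hxy]⟩
              rw [hcz i havx]
              simp only [map_zero, zero_mul]
              rw [if_neg]
              rintro ⟨hmem, -⟩
              exact (Finset.mem_filter.mp hmem).2 hxy
            · rw [if_pos ⟨Finset.mem_filter.mpr ⟨Finset.mem_univ _, hxy⟩, hb⟩]
          · rw [if_neg (fun hcnd => hb hcnd.2), if_neg (fun hav => hb (havy.mp hav)),
              mul_zero]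
      rw [Finset.sum_congr rfl fun i _ => step3 i]
      calc ∑ i : Fin P.m, (starRingEnd ℂ) (c x i) * (if P.avail y.1 i then c y i else 0)
          = ∑ i : Fin P.m, ⟪w', (if P.avail y.1 i then c y i else 0) • P.input i⟫ := by
            refine Finset.sum_congr rfl fun i _ => ?_
            rw [inner_smul_right, hcw i, inner_conj_symm]
            exact mul_comm _ _
        _ = ⟪w', ∑ i, (if P.avail y.1 i then c y i else 0) • P.input i⟫ :=
            (inner_sum _ _ _).symm
        _ = ⟪w', P.target⟫ := by rw [hwy]
        _ = 1 := by rw [← inner_conj_symm, htw, map_one]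
    rw [key]
    exact Complex.one_re
  · -- the value bound
    have h0 : 0 ≤ P.wsizeD s ↑D + ε := add_nonneg (wsizeD_nonneg P hs _) hε.le
    refine Real.iSup_le (fun x => ?_) h0
    have hb1 : ∑ j : Fin n, s j * ‖cvec (fun i =>
        if P.label i = some (j, if f x = true then x.1 j else !(x.1 j)) then c x i else 0)‖ ^ 2
        ≤ ∑ i, P.cw s i * ‖c x i‖ ^ 2 := by
      simp only [norm_cvec_sq, norm_ite_sq, Finset.mul_sum, mul_ite, mul_zero]
      rw [Finset.sum_comm]
      refine Finset.sum_le_sum fun i _ => ?_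
      rw [sum_option_label (P.label i) (fun j => if f x = true then x.1 j else !(x.1 j))
        (fun j => s j * ‖c x i‖ ^ 2) Finset.univ]
      cases hlab : P.label i with
      | none =>
        have : P.cw s i = 0 := by unfold SpanProgram.cw; rw [hlab]
        rw [this]
        simp
      | some jb =>
        obtain ⟨j0, b⟩ := jb
        simp only [Option.elim]
        have hcwv : P.cw s i = s j0 := by unfold SpanProgram.cw; rw [hlab]
        rw [hcwv]
        by_cases hcnd : j0 ∈ Finset.univ ∧ b = (if f x = true then x.1 j0 else !(x.1 j0))
        · rw [if_pos hcnd]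
        · rw [if_neg hcnd]
          exact mul_nonneg (hs j0) (by positivity)
    calc ∑ j : Fin n, s j * ‖cvec (fun i =>
          if P.label i = some (j, if f x = true then x.1 j else !(x.1 j)) then c x i else 0)‖ ^ 2
        ≤ ∑ i, P.cw s i * ‖c x i‖ ^ 2 := hb1
      _ ≤ P.wsizex s x.1 + ε := (hcost x).le
      _ ≤ P.wsizeD s ↑D + ε := add_le_add_left (wsizex_le_wsizeD P s x.2) ε

end SPaux

namespace SPaux
variable {n : ℕ}

lemma exists_feasible (D : Finset (Fin n → Bool)) (f : {x // x ∈ D} → Bool) :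
    ∃ (m : ℕ) (v : {x // x ∈ D} → Fin n → EuclideanSpace ℝ (Fin m)),
      ∀ x y : {x // x ∈ D}, f x = false → f y = true →
        ∑ j ∈ Finset.univ.filter (fun j : Fin n => x.1 j ≠ y.1 j),
          (inner ℝ (v x j) (v y j) : ℝ) = 1 := by
  classical
  refine ⟨Fintype.card {x // x ∈ D}, fun x j =>
    if f x = false then EuclideanSpace.single (eX D x) (1:ℝ)
    else WithLp.toLp 2 (fun z => if f ((eX D).symm z) = false ∧ ((eX D).symm z).1 j ≠ x.1 j
      then (((Finset.univ.filter (fun j' : Fin n =>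
        ((eX D).symm z).1 j' ≠ x.1 j')).card : ℝ))⁻¹ else 0), ?_⟩
  intro x y hx hy
  have hfy : ¬ (f y = false) := by rw [hy]; exact fun h => by cases h
  have hxy : x.1 ≠ y.1 := by
    intro h
    have hxeqy : x = y := Subtype.ext h
    rw [hxeqy, hy] at hx; cases hx
  obtain ⟨j0, hj0⟩ := Function.ne_iff.mp hxy
  have hkpos : 0 < (Finset.univ.filter (fun j' : Fin n => x.1 j' ≠ y.1 j')).card :=
    Finset.card_pos.mpr ⟨j0, Finset.mem_filter.mpr ⟨Finset.mem_univ _, hj0⟩⟩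
  simp only [if_pos hx, if_neg hfy]
  simp only [EuclideanSpace.inner_single_left, map_one, one_mul]
  simp only [PiLp.toLp_apply, Equiv.symm_apply_apply]
  rw [Finset.sum_congr rfl (fun j hj =>
    if_pos ⟨hx, (Finset.mem_filter.mp hj).2⟩)]
  rw [Finset.sum_const, nsmul_eq_mul]
  exact mul_inv_cancel₀ (Nat.cast_ne_zero.mpr hkpos.ne')

end SPaux


open SPaux in
/-- The optimal span-program witness size for `f : D → {0,1}` with costs `s`
equals the value of the vector program: the infimum over `m ∈ ℕ` and families of real vectors
`v_{x,j} ∈ ℝ^m` satisfying `∑_{j : x_j ≠ y_j} ⟨v_{x,j}, v_{y,j}⟩ = 1` for all `x ∈ F₀`, `y ∈ F₁`,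
of `max_{x ∈ D} ∑_j s_j ‖v_{x,j}‖²`. -/
theorem spanProgram_witness_size_SDP
    (n : ℕ) (D : Finset (Fin n → Bool)) (f : {x // x ∈ D} → Bool)
    (s : Fin n → ℝ) (hs : ∀ j, 0 ≤ s j) :
    sInf { r : ℝ | ∃ P : SpanProgram n,
        (∀ x : {x // x ∈ D}, (P.eval x.1 ↔ f x = true)) ∧ r = P.wsizeD s ↑D }
      =
    sInf { r : ℝ | ∃ (m : ℕ) (v : {x // x ∈ D} → Fin n → EuclideanSpace ℝ (Fin m)),
        (∀ x y : {x // x ∈ D}, f x = false → f y = true →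
          ∑ j ∈ Finset.univ.filter (fun j : Fin n => x.1 j ≠ y.1 j),
            (inner ℝ (v x j) (v y j) : ℝ) = 1) ∧
        r = ⨆ x : {x // x ∈ D}, ∑ j : Fin n, s j * ‖v x j‖ ^ 2 } := by
  classical
  -- generic facts
  have hbddL : BddBelow { r : ℝ | ∃ P : SpanProgram n,
      (∀ x : {x // x ∈ D}, (P.eval x.1 ↔ f x = true)) ∧ r = P.wsizeD s ↑D } := by
    refine ⟨0, ?_⟩
    rintro r ⟨P, -, rfl⟩
    exact wsizeD_nonneg P hs _
  have hbddR : BddBelow { r : ℝ | ∃ (m : ℕ) (v : {x // x ∈ D} → Fin n → EuclideanSpace ℝ (Fin m)),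
      (∀ x y : {x // x ∈ D}, f x = false → f y = true →
        ∑ j ∈ Finset.univ.filter (fun j : Fin n => x.1 j ≠ y.1 j),
          (inner ℝ (v x j) (v y j) : ℝ) = 1) ∧
      r = ⨆ x : {x // x ∈ D}, ∑ j : Fin n, s j * ‖v x j‖ ^ 2 } := by
    refine ⟨0, ?_⟩
    rintro r ⟨m, v, -, rfl⟩
    exact Real.iSup_nonneg fun x => Finset.sum_nonneg fun j _ =>
      mul_nonneg (hs j) (by positivity)
  -- from any feasible family, a correct span program with controlled witness size
  have hmk : ∀ (m : ℕ) (v : {x // x ∈ D} → Fin n → EuclideanSpace ℝ (Fin m)),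
      (∀ x y : {x // x ∈ D}, f x = false → f y = true →
        ∑ j ∈ Finset.univ.filter (fun j : Fin n => x.1 j ≠ y.1 j),
          (inner ℝ (v x j) (v y j) : ℝ) = 1) →
      ∃ P : SpanProgram n, (∀ x : {x // x ∈ D}, (P.eval x.1 ↔ f x = true)) ∧
        P.wsizeD s ↑D ≤ ⨆ x : {x // x ∈ D}, ∑ j : Fin n, s j * ‖v x j‖ ^ 2 := by
    intro m v hcon
    set V : {x // x ∈ D} → Fin n → Fin m → ℝ := fun x j k => v x j k with hV
    have hconV : ∀ x y : {x // x ∈ D}, f x = false → f y = true →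
        ∑ j ∈ Finset.univ.filter (fun j : Fin n => x.1 j ≠ y.1 j),
          (∑ k : Fin m, V x j k * V y j k) = 1 := by
      intro x y hx hy
      have h := hcon x y hx hy
      simp only [euclid_inner] at h
      exact h
    refine ⟨mkSP D f V, ?_, ?_⟩
    · intro x
      constructor
      · intro he
        by_contra hne
        have hx' : f x = false := by
          cases h : f x
          · rfl
          · exact absurd h hne
        exact mkSP_eval_false D f V x hx' he
      · exact fun hx => mkSP_eval_true D f V hconV x hx
    · refine Real.sSup_le ?_ (Real.iSup_nonneg fun x => Finset.sum_nonneg fun j _ =>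
        mul_nonneg (hs j) (by positivity))
      rintro r ⟨xx, hxx, rfl⟩
      have h1 := mkSP_wsizex_le D f V s hs hconV ⟨xx, hxx⟩
      have h2 : (∑ j : Fin n, s j * ∑ k : Fin m, (V ⟨xx, hxx⟩ j k) ^ 2)
          = ∑ j : Fin n, s j * ‖v ⟨xx, hxx⟩ j‖ ^ 2 := by
        refine Finset.sum_congr rfl fun j _ => ?_
        rw [euclid_norm_sq]
      refine (h1.trans_eq h2).trans ?_
      exact le_ciSup (f := fun x : {x // x ∈ D} => ∑ j : Fin n, s j * ‖v x j‖ ^ 2)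
        (Set.Finite.bddAbove (Set.finite_range _)) (⟨xx, hxx⟩ : {x // x ∈ D})
  obtain ⟨m0, v0, hcon0⟩ := exists_feasible D f
  have hRne : { r : ℝ | ∃ (m : ℕ) (v : {x // x ∈ D} → Fin n → EuclideanSpace ℝ (Fin m)),
      (∀ x y : {x // x ∈ D}, f x = false → f y = true →
        ∑ j ∈ Finset.univ.filter (fun j : Fin n => x.1 j ≠ y.1 j),
          (inner ℝ (v x j) (v y j) : ℝ) = 1) ∧
      r = ⨆ x : {x // x ∈ D}, ∑ j : Fin n, s j * ‖v x j‖ ^ 2 }.Nonempty :=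
    ⟨_, m0, v0, hcon0, rfl⟩
  obtain ⟨P0, hP0, -⟩ := hmk m0 v0 hcon0
  have hLne : { r : ℝ | ∃ P : SpanProgram n,
      (∀ x : {x // x ∈ D}, (P.eval x.1 ↔ f x = true)) ∧ r = P.wsizeD s ↑D }.Nonempty :=
    ⟨_, P0, hP0, rfl⟩
  apply le_antisymm
  · refine le_csInf hRne ?_
    rintro r ⟨m, v, hcon, rfl⟩
    obtain ⟨P, hPc, hPle⟩ := hmk m v hcon
    exact (csInf_le hbddL ⟨P, hPc, rfl⟩).trans hPle
  · refine le_csInf hLne ?_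
    rintro r ⟨P, hP, rfl⟩
    refine le_of_forall_pos_le_add fun ε hε => ?_
    obtain ⟨M, vv, hconvv, hle⟩ := dir1 D f s hs P hP hε
    exact (csInf_le hbddR ⟨M, vv, hconvv, rfl⟩).trans hle
end

section
/- Let V be a finite-dimensional complex inner product space, X a positive semidefinite operator on V, t ∈ V, and X' = X + |t⟩⟨t| (the operator w ↦ X w + ⟨t, w⟩ t). Suppose there exist δ > 0 and a nonzero vector φ in the kernel of X with |⟨t, φ⟩|² ≥ δ ‖φ‖². Then for every ξ ∈ V, δ |⟨t, ξ⟩|² ≤ ‖X' ξ‖². Moreover, if (β) is an orthonormal basis of eigenvectors of X' with eigenvalues λ(β) and ξ is a linear combination of eigenvectors β with λ(β) ≤ κ, then δ |⟨t, ξ⟩|² ≤ κ² ‖ξ‖². -/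
open scoped ComplexInnerProductSpace

lemma parseval_aux {V : Type} [NormedAddCommGroup V] [InnerProductSpace ℂ V]
    {n : ℕ} (b : OrthonormalBasis (Fin n) ℂ V) (ξ : V) :
    ‖ξ‖ ^ 2 = ∑ i, ‖⟪b i, ξ⟫‖ ^ 2 := by
  have h : ‖b.repr ξ‖ = ‖ξ‖ := b.repr.norm_map ξ
  rw [← h, EuclideanSpace.norm_eq, Real.sq_sqrt (by positivity)]
  simp [b.repr_apply_apply]

/-- Let `X` be a positive semidefinite operator on a finite-dimensional
complex inner product space `V`, `t ∈ V`, and `X' = X + |t⟩⟨t|`, i.e. `X' ξ = X ξ + ⟪t, ξ⟫ • t`.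
If some nonzero `φ ∈ ker X` has `|⟪t, φ⟫|² ≥ δ ‖φ‖²` with `δ > 0`, then
`δ |⟪t, ξ⟫|² ≤ ‖X' ξ‖²` for every `ξ`; moreover if `ξ` is a linear combination of eigenvectors
of `X'` with eigenvalues at most `κ`, then `δ |⟪t, ξ⟫|² ≤ κ² ‖ξ‖²`. -/
theorem psd_rank_one_overlap_bound
    {V : Type} [NormedAddCommGroup V] [InnerProductSpace ℂ V] [FiniteDimensional ℂ V]
    (X : V →ₗ[ℂ] V) (hsym : X.IsSymmetric) (hpsd : ∀ v : V, 0 ≤ (⟪v, X v⟫).re)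
    (t : V) (δ : ℝ) (hδ : 0 < δ)
    (φ : V) (hφ : φ ≠ 0) (hker : X φ = 0)
    (hover : δ * ‖φ‖ ^ 2 ≤ ‖⟪t, φ⟫‖ ^ 2) :
    (∀ ξ : V, δ * ‖⟪t, ξ⟫‖ ^ 2 ≤ ‖X ξ + ⟪t, ξ⟫ • t‖ ^ 2) ∧
    (∀ (κ : ℝ) (ξ : V),
      ξ ∈ Submodule.span ℂ {v : V | ∃ μ : ℝ, μ ≤ κ ∧ X v + ⟪t, v⟫ • t = (μ : ℂ) • v} →
      δ * ‖⟪t, ξ⟫‖ ^ 2 ≤ κ ^ 2 * ‖ξ‖ ^ 2) := by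
  -- the operator Y = X + |t⟩⟨t|
  set Y : V →ₗ[ℂ] V := X + (innerₛₗ ℂ t).smulRight t with hYdef
  have hYapp : ∀ w : V, Y w = X w + ⟪t, w⟫ • t := fun w => rfl
  have hYsym : Y.IsSymmetric := by
    intro v w
    simp only [hYapp, inner_add_left, inner_add_right, hsym v w,
      inner_smul_left, inner_smul_right]
    rw [inner_conj_symm]
    ring
  -- Part 1
  have part1 : ∀ ξ : V, δ * ‖⟪t, ξ⟫‖ ^ 2 ≤ ‖Y ξ‖ ^ 2 := by
    intro ξ
    have key : ⟪φ, Y ξ⟫ = ⟪t, ξ⟫ * ⟪φ, t⟫ := by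
      rw [hYapp, inner_add_right, inner_smul_right, ← hsym φ ξ, hker, inner_zero_left,
        zero_add]
    have hcs : ‖⟪φ, Y ξ⟫‖ ≤ ‖φ‖ * ‖Y ξ‖ := norm_inner_le_norm φ (Y ξ)
    have hφt : ‖⟪φ, t⟫‖ = ‖⟪t, φ⟫‖ := by rw [← inner_conj_symm t φ, RCLike.norm_conj]
    have h1 : ‖⟪t, ξ⟫‖ * ‖⟪t, φ⟫‖ ≤ ‖φ‖ * ‖Y ξ‖ := by
      calc ‖⟪t, ξ⟫‖ * ‖⟪t, φ⟫‖ = ‖⟪φ, Y ξ⟫‖ := by rw [key, norm_mul, hφt]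
        _ ≤ ‖φ‖ * ‖Y ξ‖ := hcs
    have h2 : (‖⟪t, ξ⟫‖ * ‖⟪t, φ⟫‖) ^ 2 ≤ (‖φ‖ * ‖Y ξ‖) ^ 2 := by
      apply pow_le_pow_left₀ (by positivity) h1
    have hφn : (0:ℝ) < ‖φ‖ ^ 2 := pow_pos (norm_pos_iff.mpr hφ) 2
    have h3 : ‖⟪t, ξ⟫‖ ^ 2 * (δ * ‖φ‖ ^ 2) ≤ ‖⟪t, ξ⟫‖ ^ 2 * ‖⟪t, φ⟫‖ ^ 2 := by
      apply mul_le_mul_of_nonneg_left hover (by positivity)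
    nlinarith [h2, h3]
  refine ⟨fun ξ => part1 ξ, ?_⟩
  -- Part 2
  intro κ ξ hξ
  have hn : Module.finrank ℂ V = Module.finrank ℂ V := rfl
  set b := hYsym.eigenvectorBasis hn with hb
  set lam := hYsym.eigenvalues hn with hlam
  -- eigenvalues are nonnegative
  have hlam_nonneg : ∀ i, 0 ≤ lam i := by
    intro i
    have happ := hYsym.apply_eigenvectorBasis hn i
    have hnorm : ‖b i‖ = 1 := b.orthonormal.1 i
    have h1 : ⟪b i, Y (b i)⟫ = (lam i : ℂ) := by
      rw [happ, inner_smul_right, inner_self_eq_norm_sq_to_K, hnorm]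
      simp
      rfl
    have h2 : 0 ≤ (⟪b i, Y (b i)⟫).re := by
      rw [hYapp, inner_add_right, Complex.add_re]
      have h3 : ⟪b i, ⟪t, b i⟫ • t⟫ = (Complex.normSq ⟪t, b i⟫ : ℂ) := by
        rw [inner_smul_right, mul_comm, ← inner_conj_symm t (b i), Complex.mul_conj,
          Complex.normSq_conj]
      rw [h3]
      have := hpsd (b i)
      have := Complex.normSq_nonneg ⟪t, b i⟫
      simp only [Complex.ofReal_re]
      linarith
    rw [h1] at h2
    simpa using h2
  -- coefficients vanish above κ
  have hcoef : ∀ i, κ < lam i → ⟪b i, ξ⟫ = 0 := by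
    intro i hi
    induction hξ using Submodule.span_induction with
    | mem v hv =>
      obtain ⟨μ, hμκ, heig⟩ := hv
      have hYv : Y v = (μ : ℂ) • v := by rw [hYapp]; exact heig
      have h1 : ⟪b i, Y v⟫ = (μ : ℂ) * ⟪b i, v⟫ := by rw [hYv, inner_smul_right]
      have h2 : ⟪b i, Y v⟫ = (lam i : ℂ) * ⟪b i, v⟫ := by
        rw [← hYsym (b i) v, hYsym.apply_eigenvectorBasis hn i, inner_smul_left]
        simp
        rfl
      have h3 : ((lam i : ℂ) - μ) * ⟪b i, v⟫ = 0 := by rw [sub_mul, ← h1, ← h2, sub_self]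
      have h4 : ((lam i : ℂ) - μ) ≠ 0 := by
        intro h
        have : (lam i : ℂ) = μ := by linear_combination h
        have : lam i = μ := by exact_mod_cast this
        linarith
      exact (mul_eq_zero.mp h3).resolve_left h4
    | zero => simp
    | add x y hx hy ihx ihy => rw [inner_add_right, ihx, ihy, add_zero]
    | smul c x hx ih => rw [inner_smul_right, ih, mul_zero]
  -- norm of Y ξ in coefficients
  have hrep : ∀ i, ⟪b i, Y ξ⟫ = (lam i : ℂ) * ⟪b i, ξ⟫ := by
    intro i
    rw [← hYsym (b i) ξ, hYsym.apply_eigenvectorBasis hn i, inner_smul_left]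
    simp
    rfl
  have hYnorm : ‖Y ξ‖ ^ 2 = ∑ i, (lam i) ^ 2 * ‖⟪b i, ξ⟫‖ ^ 2 := by
    rw [parseval_aux b (Y ξ)]
    apply Finset.sum_congr rfl
    intro i _
    rw [hrep i, norm_mul]
    have : ‖(lam i : ℂ)‖ = lam i := by
      rw [Complex.norm_real, Real.norm_eq_abs, abs_of_nonneg (hlam_nonneg i)]
    rw [this, mul_pow]
  have hbound : ‖Y ξ‖ ^ 2 ≤ κ ^ 2 * ‖ξ‖ ^ 2 := by
    rw [hYnorm, parseval_aux b ξ, Finset.mul_sum]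
    apply Finset.sum_le_sum
    intro i _
    by_cases h : κ < lam i
    · rw [hcoef i h]; simp
    · push_neg at h
      have h1 : (lam i) ^ 2 ≤ κ ^ 2 := by nlinarith [hlam_nonneg i]
      apply mul_le_mul_of_nonneg_right h1 (by positivity)
  exact le_trans (part1 ξ) hbound
end

section
/- Let V be a finite-dimensional complex inner product space, X a positive semidefinite operator on V, t ∈ V, and X' = X + |t⟩⟨t| (the operator w ↦ X w + ⟨t, w⟩ t). Let (β) be an orthonormal basis of eigenvectors of X' with eigenvalues λ(β) ≥ 0. Suppose there exist δ > 0 and a nonzero vector φ in the kernel of X with |⟨t, φ⟩|² ≥ δ ‖φ‖². Then every eigenvector β with ⟨t, β⟩ ≠ 0 has λ(β) > 0, and for every Λ ≥ 0, δ · ∑_{β : λ(β) ≤ Λ and ⟨t, β⟩ ≠ 0} |⟨t, β⟩|² / λ(β) ≤ 4Λ. -/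
open scoped ComplexInnerProductSpace

open Classical in
/-- With `X` positive semidefinite on finite-dimensional `V`, `t ∈ V`,
`X' = X + |t⟩⟨t|`, and `(b i)` an orthonormal eigenbasis of `X'` with eigenvalues `λ i ≥ 0`:
if some nonzero `φ ∈ ker X` satisfies `|⟪t, φ⟫|² ≥ δ ‖φ‖²` with `δ > 0`, then every eigenvector
with `⟪t, b i⟫ ≠ 0` has a strictly positive eigenvalue, and for every `Λ ≥ 0`,
`δ ∑_{i : λ i ≤ Λ, ⟪t, b i⟫ ≠ 0} |⟪t, b i⟫|² / λ i ≤ 4Λ`. -/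
theorem psd_rank_one_spectral_sum_bound
    {V : Type} [NormedAddCommGroup V] [InnerProductSpace ℂ V] [FiniteDimensional ℂ V]
    (X : V →ₗ[ℂ] V) (hsym : X.IsSymmetric) (hpsd : ∀ v : V, 0 ≤ (⟪v, X v⟫).re)
    (t : V) (δ : ℝ) (hδ : 0 < δ)
    (φ : V) (hφ : φ ≠ 0) (hker : X φ = 0)
    (hover : δ * ‖φ‖ ^ 2 ≤ ‖⟪t, φ⟫‖ ^ 2)
    {ι : Type} [Fintype ι] (b : OrthonormalBasis ι ℂ V) (lam : ι → ℝ)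
    (hlam : ∀ i, 0 ≤ lam i)
    (heig : ∀ i, X (b i) + ⟪t, b i⟫ • t = (lam i : ℂ) • b i) :
    (∀ i, ⟪t, b i⟫ ≠ 0 → 0 < lam i) ∧
    ∀ Λ : ℝ, 0 ≤ Λ →
      δ * ∑ i, (if lam i ≤ Λ ∧ ⟪t, b i⟫ ≠ 0 then ‖⟪t, b i⟫‖ ^ 2 / lam i else 0) ≤ 4 * Λ := by
  -- Part 1
  have part1 : ∀ i, ⟪t, b i⟫ ≠ 0 → 0 < lam i := by
    intro i hti
    rcases (hlam i).lt_or_eq with h | h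
    · exact h
    · exfalso
      have h0 : X (b i) + ⟪t, b i⟫ • t = 0 := by
        rw [heig i, ← h]; simp
      have h1 : ⟪b i, X (b i)⟫ + ⟪t, b i⟫ * ⟪b i, t⟫ = 0 := by
        have := congrArg (fun v => (⟪b i, v⟫ : ℂ)) h0
        simpa [inner_add_right, inner_smul_right] using this
      have h2 : ⟪t, b i⟫ * ⟪b i, t⟫ = (‖⟪t, b i⟫‖ ^ 2 : ℂ) := by
        rw [← inner_conj_symm (b i) t, RCLike.mul_conj]
        norm_cast
      rw [h2] at h1
      have h3 : (⟪b i, X (b i)⟫).re + ‖⟪t, b i⟫‖ ^ 2 = 0 := by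
        have := congrArg Complex.re h1
        simpa [← Complex.ofReal_pow] using this
      have h4 : ‖⟪t, b i⟫‖ ^ 2 = 0 := le_antisymm (by linarith [hpsd (b i)]) (sq_nonneg _)
      exact hti (norm_eq_zero.mp ((pow_eq_zero_iff two_ne_zero).mp h4))
  refine ⟨part1, ?_⟩
  -- key spectral equation
  have hTφ2pos : 0 < ‖⟪t, φ⟫‖ ^ 2 := by
    have h0 : 0 < ‖φ‖ := norm_pos_iff.mpr hφ
    have := mul_pos hδ (pow_pos h0 2)
    linarith
  have key : ∀ i, (lam i : ℂ) * ⟪b i, φ⟫ = ⟪b i, t⟫ * ⟪t, φ⟫ := by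
    intro i
    have h1 : ⟪X (b i) + ⟪t, b i⟫ • t, φ⟫ = ⟪((lam i : ℂ)) • b i, φ⟫ := by rw [heig i]
    have h2 : ⟪X (b i), φ⟫ = 0 := by rw [hsym (b i) φ, hker, inner_zero_right]
    rw [inner_add_left, h2, inner_smul_left, inner_smul_left, zero_add] at h1
    rw [Complex.conj_ofReal] at h1
    rw [h1.symm, ← inner_conj_symm t (b i)]
    simp
  -- norms of coefficients
  have keyn : ∀ i, lam i * ‖⟪b i, φ⟫‖ = ‖⟪t, b i⟫‖ * ‖⟪t, φ⟫‖ := by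
    intro i
    have := congrArg norm (key i)
    simpa [norm_mul, Complex.norm_real, abs_of_nonneg (hlam i),
      norm_inner_symm (b i) t] using this
  -- Parseval
  have hpar : ∑ i, ‖⟪b i, φ⟫‖ ^ 2 = ‖φ‖ ^ 2 := by
    have h := b.sum_inner_mul_inner φ φ
    have h2 : ∀ i, ⟪φ, b i⟫ * ⟪b i, φ⟫ = (‖⟪b i, φ⟫‖ ^ 2 : ℂ) := by
      intro i
      rw [← inner_conj_symm φ (b i), RCLike.conj_mul]
      norm_cast
    rw [Finset.sum_congr rfl (fun i _ => h2 i), inner_self_eq_norm_sq_to_K] at h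
    exact_mod_cast congrArg Complex.re h
  intro Λ hΛ
  set S := ∑ i, (if lam i ≤ Λ ∧ ⟪t, b i⟫ ≠ 0 then ‖⟪t, b i⟫‖ ^ 2 / lam i else 0) with hS
  have hterm : ∀ i, ‖⟪t, φ⟫‖ ^ 2 * (if lam i ≤ Λ ∧ ⟪t, b i⟫ ≠ 0 then ‖⟪t, b i⟫‖ ^ 2 / lam i else 0)
      ≤ Λ * ‖⟪b i, φ⟫‖ ^ 2 := by
    intro i
    by_cases hc : lam i ≤ Λ ∧ ⟪t, b i⟫ ≠ 0
    · rw [if_pos hc]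
      have hl : 0 < lam i := part1 i hc.2
      have h2 : (lam i * ‖⟪b i, φ⟫‖) ^ 2 = (‖⟪t, b i⟫‖ * ‖⟪t, φ⟫‖) ^ 2 := by
        rw [keyn i]
      have hsq : lam i ^ 2 * ‖⟪b i, φ⟫‖ ^ 2 = ‖⟪t, b i⟫‖ ^ 2 * ‖⟪t, φ⟫‖ ^ 2 := by
        linear_combination h2
      have heq : ‖⟪t, φ⟫‖ ^ 2 * (‖⟪t, b i⟫‖ ^ 2 / lam i) = lam i * ‖⟪b i, φ⟫‖ ^ 2 := by
        rw [← mul_div_assoc, div_eq_iff hl.ne']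
        linear_combination hsq.symm
      rw [heq]
      nlinarith [sq_nonneg ‖⟪b i, φ⟫‖, hc.1]
    · rw [if_neg hc]
      have := sq_nonneg ‖⟪b i, φ⟫‖
      nlinarith
  have hsum : ‖⟪t, φ⟫‖ ^ 2 * S ≤ Λ * ‖φ‖ ^ 2 := by
    rw [hS, Finset.mul_sum, ← hpar, Finset.mul_sum]
    exact Finset.sum_le_sum fun i _ => hterm i
  have hSnn : 0 ≤ S := by
    apply Finset.sum_nonneg
    intro i _
    by_cases hc : lam i ≤ Λ ∧ ⟪t, b i⟫ ≠ 0
    · rw [if_pos hc]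
      have := part1 i hc.2
      positivity
    · rw [if_neg hc]
  -- conclude
  have h1 : δ * S * ‖⟪t, φ⟫‖ ^ 2 ≤ Λ * (δ * ‖φ‖ ^ 2) := by nlinarith
  have h2 : δ * S * ‖⟪t, φ⟫‖ ^ 2 ≤ Λ * ‖⟪t, φ⟫‖ ^ 2 := by nlinarith
  have h3 : δ * S ≤ Λ := le_of_mul_le_mul_right (by linarith) hTφ2pos
  linarith
end

section
/- Let T and U be finite sets and B : ℂ^U → ℂ^T a linear map. Let A_G be the self-adjoint operator on ℂ^T ⊕ ℂ^U given by A_G(ψ_T, ψ_U) = (B ψ_U, B† ψ_T). Suppose there exist δ > 0, a vector t ∈ ℂ^T, and a nonzero ψ = (ψ_T, ψ_U) ∈ ℂ^T ⊕ ℂ^U with A_G ψ = 0 and |⟨t, ψ_T⟩|² ≥ δ ‖ψ‖². Let A_{G'} be the self-adjoint operator on ℂ^T ⊕ (ℂ ⊕ ℂ^U) given by A_{G'}(ψ_T, (ψ_0, ψ_U)) = (ψ_0 t + B ψ_U, (⟨t, ψ_T⟩, B† ψ_T)), and let e_0 = (0, (1, 0)) be the unit vector on the new coordinate. Let (α) be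 an orthonormal basis of eigenvectors of A_{G'} with eigenvalues ρ(α). Then for every Υ ≥ 0, ∑_{α : |ρ(α)| ≤ Υ} |⟨α, e_0⟩|² ≤ 8Υ²/δ. In particular (the case Υ = 0), A_{G'} has no eigenvalue-zero eigenvector with nonzero overlap with e_0. -/
open scoped ComplexInnerProductSpace
open Matrix

/-- The biadjacency matrix of the graph `G'`: the matrix `B` with the column `t` adjoined. -/
noncomputable def biadjExt {T U : Type} (B : Matrix T U ℂ) (t : EuclideanSpace ℂ T) :
    Matrix T (Unit ⊕ U) ℂ :=
  Matrix.of fun i j => Sum.elim (fun _ => t i) (fun u => B i u) j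

/-- The weighted adjacency matrix of the bipartite graph `G'` with biadjacency matrix
`[t | B]`. -/
noncomputable def adjExt {T U : Type} (B : Matrix T U ℂ) (t : EuclideanSpace ℂ T) :
    Matrix (T ⊕ (Unit ⊕ U)) (T ⊕ (Unit ⊕ U)) ℂ :=
  Matrix.fromBlocks 0 (biadjExt B t) (biadjExt B t)ᴴ 0

set_option maxHeartbeats 1000000 in
/-- If the weighted adjacency operator `A_G` of a bipartite graph with
biadjacency matrix `B` has an eigenvalue-zero eigenvector `ψ = (ψ_T, ψ_U)` with
`|⟪t, ψ_T⟫|² ≥ δ ‖ψ‖²`, then adjoining an output vertex with edge weights `t` yields an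
effective spectral gap: for any orthonormal eigenbasis `(b α)` of `A_{G'}` with eigenvalues
`ρ α` and any `Υ ≥ 0`, the squared overlap of the output vertex with eigenvectors of
eigenvalue at most `Υ` in magnitude is at most `8Υ²/δ`. -/
theorem bipartite_effective_spectral_gap
    {T U : Type} [Fintype T] [DecidableEq T] [Fintype U] [DecidableEq U]
    (B : Matrix T U ℂ) (t : EuclideanSpace ℂ T) (δ : ℝ) (hδ : 0 < δ)
    (ψT : EuclideanSpace ℂ T) (ψU : EuclideanSpace ℂ U)
    (hker₁ : Matrix.toEuclideanLin B ψU = 0)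
    (hker₂ : Matrix.toEuclideanLin Bᴴ ψT = 0)
    (hne : ¬(ψT = 0 ∧ ψU = 0))
    (hover : δ * (‖ψT‖ ^ 2 + ‖ψU‖ ^ 2) ≤ ‖⟪t, ψT⟫‖ ^ 2)
    {ι : Type} [Fintype ι]
    (b : OrthonormalBasis ι ℂ (EuclideanSpace ℂ (T ⊕ (Unit ⊕ U)))) (ρ : ι → ℝ)
    (heig : ∀ α, Matrix.toEuclideanLin (adjExt B t) (b α) = (ρ α : ℂ) • b α)
    (Υ : ℝ) (hΥ : 0 ≤ Υ) :
    ∑ α, (if |ρ α| ≤ Υ then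
        ‖⟪b α, EuclideanSpace.single (Sum.inr (Sum.inl ())) (1 : ℂ)⟫‖ ^ 2 else 0)
      ≤ 8 * Υ ^ 2 / δ := by
  classical
  set e0 : EuclideanSpace ℂ (T ⊕ (Unit ⊕ U)) :=
    EuclideanSpace.single (Sum.inr (Sum.inl ())) (1 : ℂ) with he0
  set c : ℂ := ⟪t, ψT⟫ with hc
  obtain ⟨φ, hφ⟩ : ∃ φ : EuclideanSpace ℂ (T ⊕ (Unit ⊕ U)),
      φ = (WithLp.equiv 2 (T ⊕ (Unit ⊕ U) → ℂ)).symm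
        (Sum.elim (fun i => ψT i) (Sum.elim (fun _ => (0 : ℂ)) (fun u => ψU u))) := ⟨_, rfl⟩
  -- kernel facts pointwise
  have hk1 : ∀ i, ∑ u, B i u * ψU u = 0 := by
    intro i
    have := congrFun (congrArg (WithLp.equiv 2 (T → ℂ)) hker₁) i
    simpa [Matrix.ofLp_toEuclideanLin_apply, Matrix.mulVec, dotProduct] using this
  have hk2 : ∀ u, ∑ i, (starRingEnd ℂ) (B i u) * ψT i = 0 := by
    intro u
    have := congrFun (congrArg (WithLp.equiv 2 (U → ℂ)) hker₂) u
    simpa [Matrix.ofLp_toEuclideanLin_apply, Matrix.mulVec, dotProduct,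
      Matrix.conjTranspose_apply] using this
  have hcdef : c = ∑ i, (starRingEnd ℂ) (t i) * ψT i := by
    simp [hc, PiLp.inner_apply, RCLike.inner_apply, mul_comm]
  -- A' φ = c • e0
  have hAφ : Matrix.toEuclideanLin (adjExt B t) φ = c • e0 := by
    ext i
    rw [Matrix.toEuclideanLin_apply]
    rcases i with i | (⟨⟩ | u) <;>
      simp [adjExt, biadjExt, hφ, he0, Matrix.mulVec, dotProduct,
        Fintype.sum_sum_type, Matrix.fromBlocks, Matrix.conjTranspose_apply,
        hk1, hk2, hcdef, EuclideanSpace.single_apply,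
        WithLp.equiv_apply, WithLp.equiv_symm_apply, PiLp.smul_apply]
  -- Hermitian
  have hherm : (adjExt B t).IsHermitian := by
    simp [Matrix.IsHermitian, adjExt, Matrix.fromBlocks_conjTranspose]
  have hsym := (Matrix.isHermitian_iff_isSymmetric).mp hherm
  -- key identity
  have hkey : ∀ α, c * ⟪b α, e0⟫ = (ρ α : ℂ) * ⟪b α, φ⟫ := by
    intro α
    have h1 : ⟪b α, Matrix.toEuclideanLin (adjExt B t) φ⟫
        = ⟪Matrix.toEuclideanLin (adjExt B t) (b α), φ⟫ := (hsym (b α) φ).symm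
    rw [hAφ, heig α, inner_smul_right, inner_smul_left] at h1
    simpa using h1
  -- norm of φ
  have hφn : ‖φ‖ ^ 2 = ‖ψT‖ ^ 2 + ‖ψU‖ ^ 2 := by
    rw [PiLp.norm_sq_eq_of_L2, PiLp.norm_sq_eq_of_L2 (fun _ : T => ℂ) ψT,
      PiLp.norm_sq_eq_of_L2 (fun _ : U => ℂ) ψU]
    simp [hφ, Fintype.sum_sum_type]
  -- positivity
  have hψpos : 0 < ‖ψT‖ ^ 2 + ‖ψU‖ ^ 2 := by
    rcases not_and_or.mp hne with h | h
    · have : 0 < ‖ψT‖ := norm_pos_iff.mpr h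
      positivity
    · have : 0 < ‖ψU‖ := norm_pos_iff.mpr h
      positivity
  have hcpos : 0 < ‖c‖ ^ 2 := lt_of_lt_of_le (by positivity) hover
  -- Parseval
  have hpars : ∑ α, ‖⟪b α, φ⟫‖ ^ 2 = ‖φ‖ ^ 2 := by
    have h1 : ‖b.repr φ‖ = ‖φ‖ := b.repr.norm_map φ
    have h2 := PiLp.norm_sq_eq_of_L2 (fun _ : ι => ℂ) (b.repr φ)
    rw [h1] at h2
    rw [h2]
    exact Finset.sum_congr rfl fun α _ => by rw [b.repr_apply_apply]
  -- termwise bound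
  have hterm : ∀ α, (if |ρ α| ≤ Υ then ‖⟪b α, e0⟫‖ ^ 2 else 0)
      ≤ Υ ^ 2 / ‖c‖ ^ 2 * ‖⟪b α, φ⟫‖ ^ 2 := by
    intro α
    split_ifs with h
    · have hnorm : ‖c‖ * ‖⟪b α, e0⟫‖ = |ρ α| * ‖⟪b α, φ⟫‖ := by
        have := congrArg norm (hkey α)
        simpa [norm_mul, Complex.norm_real, Real.norm_eq_abs] using this
      have hsq : ‖c‖ ^ 2 * ‖⟪b α, e0⟫‖ ^ 2 = |ρ α| ^ 2 * ‖⟪b α, φ⟫‖ ^ 2 := by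
        rw [← mul_pow, ← mul_pow, hnorm]
      have h3 : |ρ α| ^ 2 * ‖⟪b α, φ⟫‖ ^ 2 ≤ Υ ^ 2 * ‖⟪b α, φ⟫‖ ^ 2 := by
        have : |ρ α| ^ 2 ≤ Υ ^ 2 := by
          apply sq_le_sq' <;> [linarith [abs_nonneg (ρ α)]; exact h]
        nlinarith [sq_nonneg ‖⟪b α, φ⟫‖]
      rw [div_mul_eq_mul_div, le_div_iff₀ hcpos, mul_comm (‖⟪b α, e0⟫‖ ^ 2)]
      rw [hsq]; exact h3
    · positivity
  calc ∑ α, (if |ρ α| ≤ Υ then ‖⟪b α, e0⟫‖ ^ 2 else 0)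
      ≤ ∑ α, Υ ^ 2 / ‖c‖ ^ 2 * ‖⟪b α, φ⟫‖ ^ 2 := Finset.sum_le_sum fun α _ => hterm α
    _ = Υ ^ 2 / ‖c‖ ^ 2 * ‖φ‖ ^ 2 := by rw [← Finset.mul_sum, hpars]
    _ ≤ Υ ^ 2 / δ := by
        have h4 : Υ ^ 2 * (δ * (‖ψT‖ ^ 2 + ‖ψU‖ ^ 2)) ≤ Υ ^ 2 * ‖c‖ ^ 2 :=
          mul_le_mul_of_nonneg_left hover (by positivity)
        rw [div_mul_eq_mul_div, div_le_div_iff₀ hcpos hδ, hφn]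
        nlinarith [h4]
    _ ≤ 8 * Υ ^ 2 / δ := by
        rw [div_le_div_iff₀ hδ hδ]
        nlinarith
end

section
/- For every span program P on n boolean variables there exists a span program P† on n boolean variables, dual to P, such that f_{P†}(x) = 1 − f_P(x) for every x ∈ {0,1}^n, and wsize_s(P†, x) = wsize_s(P, x) for every x ∈ {0,1}^n and every cost vector s ∈ [0,∞)^n. -/
open scoped ComplexInnerProductSpace

namespace SpanProgram

variable {n : ℕ}

@[reducible] noncomputable def dual (P : SpanProgram n) : SpanProgram n where
  d := P.m + 1
  m := P.m + P.d
  label := Fin.addCases (fun i => (P.label i).map fun jb => (jb.1, !jb.2)) fun _ => none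
  target := EuclideanSpace.single 0 1
  input := Fin.addCases
    (fun i => if P.label i = none then 0 else EuclideanSpace.single i.succ 1)
    (fun k => WithLp.toLp 2 (fun c => Fin.cases (P.target k) (fun i => P.input i k) c : Fin (P.m+1) → ℂ))

variable (P : SpanProgram n) (x : Fin n → Bool) (s : Fin n → ℝ)

lemma dual_label_left (i : Fin P.m) :
    (P.dual).label (Fin.castAdd P.d i) = (P.label i).map fun jb => (jb.1, !jb.2) := by
  simp [dual]

lemma dual_label_right (k : Fin P.d) :
    (P.dual).label (Fin.natAdd P.m k) = none := by
  simp [dual]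

lemma dual_avail_left (i : Fin P.m) :
    (P.dual).avail x (Fin.castAdd P.d i) ↔ (P.label i = none ∨ ¬ P.avail x i) := by
  unfold avail
  rw [dual_label_left]
  rcases h : P.label i with _ | ⟨j, b⟩
  · simp
  · cases b <;> cases hxj : x j <;> simp_all

lemma dual_avail_right (k : Fin P.d) : (P.dual).avail x (Fin.natAdd P.m k) := by
  left; exact dual_label_right P k

lemma dual_cw_left (i : Fin P.m) :
    (P.dual).cw s (Fin.castAdd P.d i) = P.cw s i := by
  unfold cw
  rw [dual_label_left]
  rcases P.label i with _ | ⟨j, b⟩ <;> simp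

lemma dual_cw_right (k : Fin P.d) : (P.dual).cw s (Fin.natAdd P.m k) = 0 := by
  unfold cw
  rw [dual_label_right]

lemma dual_input_left (i : Fin P.m) :
    (P.dual).input (Fin.castAdd P.d i)
      = if P.label i = none then 0 else EuclideanSpace.single i.succ 1 := by
  simp [dual]

lemma dual_input_right (k : Fin P.d) :
    (P.dual).input (Fin.natAdd P.m k)
      = WithLp.toLp 2 (fun c => Fin.cases (P.target k) (fun i => P.input i k) c : Fin (P.m+1) → ℂ) := by
  simp [dual]

lemma dual_target : (P.dual).target = EuclideanSpace.single (0 : Fin (P.m+1)) 1 := rfl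

lemma dual_cost_sum (g : Fin (P.m + P.d) → ℂ) :
    ∑ i : Fin (P.m + P.d), (P.dual).cw s i * ‖g i‖ ^ 2
      = ∑ i : Fin P.m, P.cw s i * ‖g (Fin.castAdd P.d i)‖ ^ 2 := by
  rw [Fin.sum_univ_add]
  simp [dual_cw_left, dual_cw_right]

local notation "conj'" => starRingEnd ℂ

lemma dual_pw_iff (W : Fin (P.m + P.d) → ℂ) :
    (∑ i : Fin (P.m + P.d), (if (P.dual).avail x i then W i else 0) • (P.dual).input i
        = (P.dual).target) ↔
    ((∑ k, W (Fin.natAdd P.m k) * P.target k = 1) ∧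
     ∀ i : Fin P.m,
       (if P.label i ≠ none ∧ ¬ P.avail x i then W (Fin.castAdd P.d i) else 0)
         + ∑ k, W (Fin.natAdd P.m k) * P.input i k = 0) := by
  have ha : ∀ (N : ℕ) (F : Fin N → EuclideanSpace ℂ (Fin (P.m+1))) (c : Fin (P.m+1)),
      (∑ i, F i) c = ∑ i, F i c := fun N F c => by rw [WithLp.ofLp_sum, Finset.sum_apply]
  have hL : ∀ c : Fin (P.m + 1),
      (∑ i : Fin (P.m + P.d), (if (P.dual).avail x i then W i else 0) • (P.dual).input i) c
      = (∑ i : Fin P.m, (if P.label i ≠ none ∧ ¬ P.avail x i then W (Fin.castAdd P.d i) else 0)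
            * (if c = i.succ then 1 else 0))
        + ∑ k : Fin P.d, W (Fin.natAdd P.m k) * (Fin.cases (P.target k) (fun i => P.input i k) c) := by
    intro c
    rw [Fin.sum_univ_add, show ∀ u v : EuclideanSpace ℂ (Fin (P.m+1)), (u + v) c = u c + v c
        from fun _ _ => rfl, ha, ha]
    congr 1
    · refine Finset.sum_congr rfl fun i _ => ?_
      rw [show ((if (P.dual).avail x (Fin.castAdd P.d i) then W (Fin.castAdd P.d i) else 0)
            • (P.dual).input (Fin.castAdd P.d i)) c
          = (if (P.dual).avail x (Fin.castAdd P.d i) then W (Fin.castAdd P.d i) else 0)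
            * ((P.dual).input (Fin.castAdd P.d i)) c from rfl]
      rw [dual_input_left]
      rcases h : P.label i with _ | jb
      · simp [show ((0 : EuclideanSpace ℂ (Fin (P.m+1)))) c = 0 from rfl]
      · have hav : (P.dual).avail x (Fin.castAdd P.d i) ↔ ¬ P.avail x i := by
          rw [dual_avail_left, h]; simp
        simp [hav, EuclideanSpace.single_apply]
    · refine Finset.sum_congr rfl fun k _ => ?_
      rw [if_pos (dual_avail_right P x k), dual_input_right]
      rfl
  have hT0 : (P.dual).target (0 : Fin (P.m+1)) = 1 := by
    rw [dual_target, EuclideanSpace.single_apply]; simp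
  have hTs : ∀ i : Fin P.m, (P.dual).target (i.succ : Fin (P.m+1)) = 0 := by
    intro i
    rw [dual_target, EuclideanSpace.single_apply]; simp [Fin.succ_ne_zero]
  have hdelta : ∀ i : Fin P.m,
      (∑ i' : Fin P.m, (if P.label i' ≠ none ∧ ¬ P.avail x i' then W (Fin.castAdd P.d i') else 0)
          * (if (i.succ : Fin (P.m+1)) = i'.succ then 1 else 0))
        = (if P.label i ≠ none ∧ ¬ P.avail x i then W (Fin.castAdd P.d i) else 0) := by
    intro i
    rw [Finset.sum_eq_single i
      (fun i' _ hne => by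
        have hss : (i.succ : Fin (P.m+1)) ≠ i'.succ := by
          simpa [Fin.succ_inj] using Ne.symm hne
        rw [if_neg hss, mul_zero])
      (fun hmem => absurd (Finset.mem_univ i) hmem)]
    simp
  constructor
  · intro h
    constructor
    · have h0 := congrFun (congrArg WithLp.ofLp h) (0 : Fin (P.m+1))
      rw [hL, hT0] at h0
      simpa [eq_comm, Fin.succ_ne_zero] using h0
    · intro i
      have hi := congrFun (congrArg WithLp.ofLp h) (i.succ : Fin (P.m+1))
      rw [hL, hTs, hdelta] at hi
      simpa using hi
  · rintro ⟨h1, h2⟩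
    ext c
    rw [hL]
    induction c using Fin.cases with
    | zero => rw [hT0]; simpa [eq_comm, Fin.succ_ne_zero] using h1
    | succ i => rw [hTs, hdelta]; simpa using h2 i

lemma dual_nw_iff (W : EuclideanSpace ℂ (Fin (P.m+1))) :
    (⟪(P.dual).target, W⟫ = 1 ∧ ∀ i, (P.dual).avail x i → ⟪(P.dual).input i, W⟫ = 0) ↔
    (W 0 = 1 ∧
     (∀ i : Fin P.m, P.label i ≠ none → ¬ P.avail x i → W i.succ = 0) ∧
     ∀ k : Fin P.d, conj' (P.target k) * W 0
        + ∑ i : Fin P.m, conj' (P.input i k) * W i.succ = 0) := by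
  have hT : ⟪(P.dual).target, W⟫ = W 0 := by
    rw [dual_target, EuclideanSpace.inner_single_left]; simp
  have hinL : ∀ i : Fin P.m, P.label i ≠ none →
      ⟪(P.dual).input (Fin.castAdd P.d i), W⟫ = W i.succ := by
    intro i hl
    rw [dual_input_left, if_neg hl, EuclideanSpace.inner_single_left]; simp
  have hinL0 : ∀ i : Fin P.m, P.label i = none →
      ⟪(P.dual).input (Fin.castAdd P.d i), W⟫ = 0 := by
    intro i hl
    rw [dual_input_left, if_pos hl, inner_zero_left]
  have hinR : ∀ k : Fin P.d, ⟪(P.dual).input (Fin.natAdd P.m k), W⟫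
      = conj' (P.target k) * W 0 + ∑ i : Fin P.m, conj' (P.input i k) * W i.succ := by
    intro k
    rw [dual_input_right]
    rw [PiLp.inner_apply, Fin.sum_univ_succ]
    simp [RCLike.inner_apply, mul_comm]
  constructor
  · rintro ⟨h1, h2⟩
    refine ⟨by rwa [hT] at h1, fun i hl hna => ?_, fun k => ?_⟩
    · have := h2 (Fin.castAdd P.d i) ((dual_avail_left P x i).2 (Or.inr hna))
      rwa [hinL i hl] at this
    · have := h2 (Fin.natAdd P.m k) (dual_avail_right P x k)
      rwa [hinR] at this
  · rintro ⟨h1, h2, h3⟩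
    refine ⟨by rw [hT]; exact h1, fun i0 => ?_⟩
    refine Fin.addCases (fun i hav => ?_) (fun k _ => ?_) i0
    · rcases hl : P.label i with _ | jb
      · exact hinL0 i hl
      · have hna : ¬ P.avail x i := by
          rcases (dual_avail_left P x i).1 hav with h | h
          · exact absurd h (by simp [hl])
          · exact h
        rw [hinL i (by simp [hl])]
        exact h2 i (by simp [hl]) hna
    · rw [hinR]; exact h3 k

lemma cw_nonneg (Q : SpanProgram n) (hs : ∀ j, 0 ≤ s j) (i : Fin Q.m) : 0 ≤ Q.cw s i := by
  unfold cw
  rcases Q.label i with _ | jb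
  · exact le_refl 0
  · exact hs jb.1

lemma cw_of_none {P : SpanProgram n} {i : Fin P.m} (h : P.label i = none) : P.cw s i = 0 := by
  unfold cw; rw [h]

lemma cw_of_some {P : SpanProgram n} {i : Fin P.m} {jb} (h : P.label i = some jb) :
    P.cw s i = s jb.1 := by
  unfold cw; rw [h]

def toEuc {N : ℕ} (f : Fin N → ℂ) : EuclideanSpace ℂ (Fin N) := WithLp.toLp 2 f

lemma toEuc_apply {N : ℕ} (f : Fin N → ℂ) (k : Fin N) : toEuc f k = f k := rfl

lemma inner_toEuc {N : ℕ} (u : EuclideanSpace ℂ (Fin N)) (f : Fin N → ℂ) :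
    (⟪u, toEuc f⟫ : ℂ) = ∑ k, conj' (u k) * f k := by
  simp [toEuc, PiLp.inner_apply, RCLike.inner_apply, mul_comm]

lemma sum_apply' {N M : ℕ} (F : Fin M → EuclideanSpace ℂ (Fin N)) (c : Fin N) :
    (∑ i, F i) c = ∑ i, F i c := by rw [WithLp.ofLp_sum, Finset.sum_apply]

lemma exists_nw (h : ¬ P.eval x) :
    ∃ w' : EuclideanSpace ℂ (Fin P.d), ⟪P.target, w'⟫ = 1 ∧
      ∀ i, P.avail x i → ⟪P.input i, w'⟫ = 0 := by
  classical
  set g : Fin P.m → EuclideanSpace ℂ (Fin P.d) := fun i => if P.avail x i then P.input i else 0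
    with hg
  set U : Submodule ℂ (EuclideanSpace ℂ (Fin P.d)) := Submodule.span ℂ (Set.range g) with hU
  have htU : P.target ∉ U := by
    intro ht
    rw [hU, Submodule.mem_span_range_iff_exists_fun] at ht
    obtain ⟨c, hc⟩ := ht
    refine h ⟨c, ?_⟩
    rw [← hc]
    refine Finset.sum_congr rfl fun i _ => ?_
    by_cases hav : P.avail x i <;> simp [hg, hav]
  set p : EuclideanSpace ℂ (Fin P.d) := (U.orthogonalProjectionOnto P.target : EuclideanSpace ℂ (Fin P.d)) with hp
  set u := P.target - p with hu
  have huU : u ∈ Uᗮ := U.sub_starProjection_mem_orthogonal P.target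
  have hune : u ≠ 0 := by
    intro h0
    apply htU
    have hpt : P.target = p := by rwa [hu, sub_eq_zero] at h0
    rw [hpt, hp]
    exact SetLike.coe_mem _
  have hnu : ((‖u‖ : ℂ))^2 ≠ 0 := by
    simp [hune]
  refine ⟨((‖u‖:ℂ)^2)⁻¹ • u, ?_, ?_⟩
  · have hpu : (⟪p, u⟫ : ℂ) = 0 :=
      (Submodule.mem_orthogonal U u).1 huU p (hp ▸ SetLike.coe_mem _)
    have htu : (⟪P.target, u⟫ : ℂ) = (‖u‖:ℂ)^2 := by
      have : P.target = u + p := by rw [hu]; abel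
      rw [this, inner_add_left, hpu, add_zero, inner_self_eq_norm_sq_to_K]
      norm_num
    rw [inner_smul_right, htu, inv_mul_cancel₀ hnu]
  · intro i hav
    have hgU : P.input i ∈ U := by
      apply Submodule.subset_span
      exact ⟨i, by simp [hg, hav]⟩
    rw [inner_smul_right, (Submodule.mem_orthogonal U u).1 huU _ hgU, mul_zero]

lemma inner_conj_sum {N : ℕ} (u v : EuclideanSpace ℂ (Fin N)) :
    conj' (⟪u, v⟫ : ℂ) = ∑ k, conj' (v k) * u k := by
  simp [PiLp.inner_apply, RCLike.inner_apply, map_sum, mul_comm]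

lemma lemI (w' : EuclideanSpace ℂ (Fin P.d))
    (hw1 : ⟪P.target, w'⟫ = 1) (hw0 : ∀ i, P.avail x i → ⟪P.input i, w'⟫ = 0) :
    (∑ i : Fin (P.m + P.d),
        (if (P.dual).avail x i then
          (Fin.addCases (motive := fun _ => ℂ)
            (fun i => -conj' ⟪P.input i, w'⟫) (fun k => conj' (w' k)) i) else 0)
          • (P.dual).input i = (P.dual).target) ∧
    (∑ i : Fin (P.m + P.d), (P.dual).cw s i
        * ‖Fin.addCases (motive := fun _ => ℂ)
            (fun i => -conj' ⟪P.input i, w'⟫) (fun k => conj' (w' k)) i‖ ^ 2)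
      = ∑ i, P.cw s i * ‖(⟪P.input i, w'⟫ : ℂ)‖ ^ 2 := by
  constructor
  · rw [dual_pw_iff]
    constructor
    · simp only [Fin.addCases_right]
      rw [← inner_conj_sum, hw1, map_one]
    · intro i
      simp only [Fin.addCases_left, Fin.addCases_right]
      rw [← inner_conj_sum]
      by_cases hcond : P.label i ≠ none ∧ ¬ P.avail x i
      · rw [if_pos hcond]; ring
      · rw [if_neg hcond, zero_add]
        have hav : P.avail x i := by
          rcases not_and_or.1 hcond with h | h
          · exact Or.inl (not_not.1 h)
          · exact not_not.1 h
        rw [hw0 i hav, map_zero]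
  · rw [dual_cost_sum]
    refine Finset.sum_congr rfl fun i _ => ?_
    rw [Fin.addCases_left, norm_neg, RCLike.norm_conj]

lemma lemII (hs : ∀ j, 0 ≤ s j) (W : Fin (P.m + P.d) → ℂ)
    (hW : ∑ i : Fin (P.m + P.d),
        (if (P.dual).avail x i then W i else 0) • (P.dual).input i = (P.dual).target) :
    ((⟪P.target, toEuc (fun k => conj' (W (Fin.natAdd P.m k)))⟫ : ℂ) = 1 ∧
     ∀ i, P.avail x i → (⟪P.input i, toEuc (fun k => conj' (W (Fin.natAdd P.m k)))⟫ : ℂ) = 0) ∧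
    ∑ i, P.cw s i * ‖(⟪P.input i, toEuc (fun k => conj' (W (Fin.natAdd P.m k)))⟫ : ℂ)‖^2
      ≤ ∑ i : Fin (P.m + P.d), (P.dual).cw s i * ‖W i‖^2 := by
  obtain ⟨h1, h2⟩ := (dual_pw_iff P x W).1 hW
  have e : ∀ u : EuclideanSpace ℂ (Fin P.d),
      (⟪u, toEuc (fun k => conj' (W (Fin.natAdd P.m k)))⟫ : ℂ)
        = conj' (∑ k, W (Fin.natAdd P.m k) * u k) := by
    intro u
    rw [inner_toEuc, map_sum]
    refine Finset.sum_congr rfl fun k _ => ?_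
    rw [map_mul]
    ring
  have hz : ∀ i, P.avail x i →
      (⟪P.input i, toEuc (fun k => conj' (W (Fin.natAdd P.m k)))⟫ : ℂ) = 0 := by
    intro i hav
    have := h2 i
    rw [if_neg (by intro hc; exact hc.2 hav), zero_add] at this
    rw [e, this, map_zero]
  refine ⟨⟨by rw [e, h1, map_one], hz⟩, ?_⟩
  rw [dual_cost_sum]
  refine Finset.sum_le_sum fun i _ => ?_
  rcases hl : P.label i with _ | jb
  · rw [cw_of_none (s := s) hl]
    simp
  · by_cases hav : P.avail x i
    · rw [hz i hav]
      have h0 : P.cw s i * ‖(0:ℂ)‖^2 = 0 := by simp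
      rw [h0]
      exact mul_nonneg (cw_nonneg s P hs i) (by positivity)
    · have := h2 i
      rw [if_pos ⟨by simp [hl], hav⟩] at this
      have hWi : W (Fin.castAdd P.d i)
          = -(∑ k, W (Fin.natAdd P.m k) * P.input i k) :=
        eq_neg_of_add_eq_zero_left this
      rw [e, hWi, norm_neg, RCLike.norm_conj]

lemma lemIII (hs : ∀ j, 0 ≤ s j) (w : Fin P.m → ℂ)
    (hw : ∑ i, (if P.avail x i then w i else 0) • P.input i = P.target) :
    ((⟪(P.dual).target,
        (toEuc (fun c => Fin.cases 1 (fun i => -conj' (if P.avail x i then w i else 0)) c)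
          : EuclideanSpace ℂ (Fin (P.m+1)))⟫ : ℂ) = 1 ∧
     ∀ i, (P.dual).avail x i → (⟪(P.dual).input i,
        (toEuc (fun c => Fin.cases 1 (fun i => -conj' (if P.avail x i then w i else 0)) c)
          : EuclideanSpace ℂ (Fin (P.m+1)))⟫ : ℂ) = 0) ∧
    ∑ i : Fin (P.m + P.d), (P.dual).cw s i * ‖(⟪(P.dual).input i,
        (toEuc (fun c => Fin.cases 1 (fun i => -conj' (if P.avail x i then w i else 0)) c)
          : EuclideanSpace ℂ (Fin (P.m+1)))⟫ : ℂ)‖^2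
      ≤ ∑ i, P.cw s i * ‖w i‖^2 := by
  set W : EuclideanSpace ℂ (Fin (P.m+1)) :=
    toEuc (fun c => Fin.cases 1 (fun i => -conj' (if P.avail x i then w i else 0)) c) with hWdef
  have hW0 : W 0 = 1 := rfl
  have hWs : ∀ i : Fin P.m, W i.succ = -conj' (if P.avail x i then w i else 0) := fun i => rfl
  have hco : ∀ k : Fin P.d,
      ∑ i, (if P.avail x i then w i else 0) * P.input i k = P.target k := by
    intro k
    have := congrFun (congrArg WithLp.ofLp hw) k
    rw [sum_apply'] at this
    exact this
  have hnw : (⟪(P.dual).target, W⟫ : ℂ) = 1 ∧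
      ∀ i, (P.dual).avail x i → (⟪(P.dual).input i, W⟫ : ℂ) = 0 := by
    rw [dual_nw_iff]
    refine ⟨hW0, fun i hl hna => ?_, fun k => ?_⟩
    · rw [hWs]
      simp [hna]
    · rw [hW0, mul_one]
      have he : ∑ i : Fin P.m, conj' (P.input i k) * W i.succ
          = -conj' (∑ i, (if P.avail x i then w i else 0) * P.input i k) := by
        rw [map_sum, ← Finset.sum_neg_distrib]
        refine Finset.sum_congr rfl fun i _ => ?_
        rw [hWs, map_mul]
        ring
      rw [he, hco]
      ring
  refine ⟨hnw, ?_⟩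
  rw [dual_cost_sum]
  refine Finset.sum_le_sum fun i _ => ?_
  rcases hl : P.label i with _ | jb
  · rw [cw_of_none (s := s) hl]
    simp
  · have hin : (⟪(P.dual).input (Fin.castAdd P.d i), W⟫ : ℂ) = W i.succ := by
      rw [dual_input_left, if_neg (by simp [hl]), EuclideanSpace.inner_single_left]
      simp
    rw [hin, hWs, norm_neg, RCLike.norm_conj]
    by_cases hav : P.avail x i
    · rw [if_pos hav]
    · rw [if_neg hav, norm_zero]
      have h0 : P.cw s i * (0:ℝ)^2 = 0 := by ring
      rw [h0]
      exact mul_nonneg (cw_nonneg s P hs i) (by positivity)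

lemma lemIV (W : EuclideanSpace ℂ (Fin (P.m+1)))
    (hW1 : (⟪(P.dual).target, W⟫ : ℂ) = 1)
    (hW2 : ∀ i, (P.dual).avail x i → (⟪(P.dual).input i, W⟫ : ℂ) = 0) :
    (∑ i, (if P.avail x i then -conj' (W i.succ) else 0) • P.input i = P.target) ∧
    ∑ i : Fin (P.m + P.d), (P.dual).cw s i * ‖(⟪(P.dual).input i, W⟫ : ℂ)‖^2
      = ∑ i, P.cw s i * ‖-conj' (W i.succ)‖^2 := by
  obtain ⟨h1, h2, h3⟩ := (dual_nw_iff P x W).1 ⟨hW1, hW2⟩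
  constructor
  · ext k
    rw [sum_apply']
    have hterm : ∀ i : Fin P.m,
        ((if P.avail x i then -conj' (W i.succ) else 0) • P.input i) k
          = -conj' (W i.succ) * P.input i k := by
      intro i
      by_cases hav : P.avail x i
      · rw [if_pos hav]; rfl
      · rw [if_neg hav]
        have hl : P.label i ≠ none := by
          intro hc
          exact hav (Or.inl hc)
        rw [h2 i hl hav]
        show (0:ℂ) * P.input i k = -conj' (0:ℂ) * P.input i k
        simp
    rw [Finset.sum_congr rfl fun i _ => hterm i]
    have := h3 k
    rw [h1, mul_one] at this
    have hc := congrArg conj' this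
    simp only [map_add, map_sum, map_mul, map_zero, Complex.conj_conj] at hc
    have hsum : ∑ i : Fin P.m, -conj' (W i.succ) * P.input i k
        = -∑ i : Fin P.m, P.input i k * conj' (W i.succ) := by
      rw [← Finset.sum_neg_distrib]
      exact Finset.sum_congr rfl fun i _ => by ring
    rw [hsum]
    exact neg_eq_of_add_eq_zero_left hc
  · rw [dual_cost_sum]
    refine Finset.sum_congr rfl fun i _ => ?_
    rcases hl : P.label i with _ | jb
    · rw [cw_of_none (s := s) hl, zero_mul, zero_mul]
    · have hin : (⟪(P.dual).input (Fin.castAdd P.d i), W⟫ : ℂ) = W i.succ := by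
        rw [dual_input_left, if_neg (by simp [hl]), EuclideanSpace.inner_single_left]
        simp
      rw [hin, norm_neg, RCLike.norm_conj]

lemma dual_eval : (P.dual).eval x ↔ ¬ P.eval x := by
  constructor
  · rintro ⟨W, hW⟩ ⟨w, hw⟩
    obtain ⟨⟨h1, h2⟩, _⟩ := lemII P x (fun _ => 0) (fun j => le_refl 0) W hW
    have hcontra : (1:ℂ) = 0 := by
      rw [← h1, ← hw, sum_inner]
      refine Finset.sum_eq_zero fun i _ => ?_
      by_cases hav : P.avail x i
      · rw [if_pos hav, inner_smul_left, h2 i hav, mul_zero]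
      · rw [if_neg hav, zero_smul, inner_zero_left]
    exact one_ne_zero hcontra
  · intro hev
    obtain ⟨w', hw1, hw0⟩ := exists_nw P x hev
    exact ⟨_, (lemI P x (fun _ => 0) w' hw1 hw0).1⟩

lemma csInf_eq_of_approx {A B : Set ℝ} (hA0 : ∀ a ∈ A, 0 ≤ a) (hB0 : ∀ b ∈ B, 0 ≤ b)
    (hAne : A.Nonempty)
    (hAB : ∀ a ∈ A, ∃ b ∈ B, b ≤ a) (hBA : ∀ b ∈ B, ∃ a ∈ A, a ≤ b) :
    sInf A = sInf B := by
  obtain ⟨a0, ha0⟩ := hAne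
  obtain ⟨b0, hb0, _⟩ := hAB a0 ha0
  apply le_antisymm
  · apply le_csInf ⟨b0, hb0⟩
    intro b hb
    obtain ⟨a, ha, hab⟩ := hBA b hb
    exact le_trans (csInf_le ⟨0, fun a ha => hA0 a ha⟩ ha) hab
  · apply le_csInf ⟨a0, ha0⟩
    intro a ha
    obtain ⟨b, hb, hba⟩ := hAB a ha
    exact le_trans (csInf_le ⟨0, fun b hb => hB0 b hb⟩ hb) hba


end SpanProgram

open SpanProgram

/-- Every span program has a dual span program computing the complementary
function, with exactly the same witness sizes for all inputs and all cost vectors. -/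
theorem spanProgram_dual_exists (n : ℕ) (P : SpanProgram n) :
    ∃ Pd : SpanProgram n,
      (∀ x : Fin n → Bool, (Pd.eval x ↔ ¬ P.eval x)) ∧
      ∀ (s : Fin n → ℝ), (∀ j, 0 ≤ s j) →
        ∀ x : Fin n → Bool, Pd.wsizex s x = P.wsizex s x := by
  classical
  refine ⟨P.dual, fun x => dual_eval P x, fun s hs x => ?_⟩
  by_cases hev : P.eval x
  · have hnev : ¬ (P.dual).eval x := fun h => (dual_eval P x).1 h hev
    rw [wsizex, wsizex, if_neg hnev, if_pos hev]
    apply csInf_eq_of_approx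
    · rintro a ⟨W, hW1, hW2, rfl⟩
      exact Finset.sum_nonneg fun i _ => mul_nonneg (cw_nonneg s (P.dual) hs i) (by positivity)
    · rintro b ⟨w, hw, rfl⟩
      exact Finset.sum_nonneg fun i _ => mul_nonneg (cw_nonneg s P hs i) (by positivity)
    · obtain ⟨w, hw⟩ := hev
      obtain ⟨⟨h1, h2⟩, _⟩ := lemIII P x s hs w hw
      exact ⟨_, ⟨_, h1, h2, rfl⟩⟩
    · rintro a ⟨W, hW1, hW2, rfl⟩
      obtain ⟨hpw, hcost⟩ := lemIV P x s W hW1 hW2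
      exact ⟨_, ⟨_, hpw, rfl⟩, le_of_eq hcost.symm⟩
    · rintro b ⟨w, hw, rfl⟩
      obtain ⟨⟨h1, h2⟩, hcost⟩ := lemIII P x s hs w hw
      exact ⟨_, ⟨_, h1, h2, rfl⟩, hcost⟩
  · have hdev : (P.dual).eval x := (dual_eval P x).2 hev
    rw [wsizex, wsizex, if_pos hdev, if_neg hev]
    apply csInf_eq_of_approx
    · rintro a ⟨W, hW, rfl⟩
      exact Finset.sum_nonneg fun i _ => mul_nonneg (cw_nonneg s (P.dual) hs i) (by positivity)
    · rintro b ⟨w', h1, h2, rfl⟩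
      exact Finset.sum_nonneg fun i _ => mul_nonneg (cw_nonneg s P hs i) (by positivity)
    · obtain ⟨w', hw1, hw0⟩ := exists_nw P x hev
      obtain ⟨hpw, _⟩ := lemI P x s w' hw1 hw0
      exact ⟨_, ⟨_, hpw, rfl⟩⟩
    · rintro a ⟨W, hW, rfl⟩
      obtain ⟨⟨h1, h2⟩, hcost⟩ := lemII P x s hs W hW
      exact ⟨_, ⟨_, h1, h2, rfl⟩, hcost⟩
    · rintro b ⟨w', hw1, hw0, rfl⟩
      obtain ⟨hpw, hcost⟩ := lemI P x s w' hw1 hw0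
      exact ⟨_, ⟨_, hpw, rfl⟩, le_of_eq hcost⟩
end

section
/- For every span program P on n boolean variables there exists a strict span program P' on n boolean variables (i.e., one with no free input vectors: I_free = ∅) such that f_{P'}(x) = f_P(x) and wsize_s(P', x) = wsize_s(P, x) for every x ∈ {0,1}^n and every cost vector s ∈ [0,∞)^n. -/
open scoped ComplexInnerProductSpace

namespace SpanProgram

variable {n : ℕ}

-- auxiliary development
noncomputable section Aux

variable (P : SpanProgram n)

/-- span of the free input vectors -/
def freeSpan : Submodule ℂ (EuclideanSpace ℂ (Fin P.d)) :=
  Submodule.span ℂ (Set.range fun i : {i : Fin P.m // P.label i = none} => P.input i)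

def Q : EuclideanSpace ℂ (Fin P.d) →ₗ[ℂ] EuclideanSpace ℂ (Fin P.d) :=
  LinearMap.id - P.freeSpan.subtype ∘ₗ (Submodule.orthogonalProjectionOnto P.freeSpan).toLinearMap

lemma Q_apply (v : EuclideanSpace ℂ (Fin P.d)) :
    P.Q v = v - (Submodule.orthogonalProjectionOnto P.freeSpan v : EuclideanSpace ℂ (Fin P.d)) := rfl

lemma Q_free {i : Fin P.m} (h : P.label i = none) : P.Q (P.input i) = 0 := by
  rw [Q_apply, sub_eq_zero, eq_comm, ← Submodule.starProjection_apply, Submodule.starProjection_eq_self_iff]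
  exact Submodule.subset_span ⟨⟨i, h⟩, rfl⟩

lemma sub_Q_mem (v : EuclideanSpace ℂ (Fin P.d)) : v - P.Q v ∈ P.freeSpan := by
  rw [Q_apply, sub_sub_cancel]; exact (Submodule.orthogonalProjectionOnto P.freeSpan v).2

lemma mem_of_Q_eq_zero {v : EuclideanSpace ℂ (Fin P.d)} (h : P.Q v = 0) : v ∈ P.freeSpan := by
  have := P.sub_Q_mem v; rwa [h, sub_zero] at this

lemma inner_Q (u v : EuclideanSpace ℂ (Fin P.d)) : ⟪P.Q u, v⟫ = ⟪u, P.Q v⟫ := by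
  simp only [Q_apply, inner_sub_left, inner_sub_right,
    ← Submodule.starProjection_apply, Submodule.inner_starProjection_left_eq_right]

lemma inner_Q_left {w : EuclideanSpace ℂ (Fin P.d)}
    (hw : ∀ v ∈ P.freeSpan, ⟪v, w⟫ = 0) (u : EuclideanSpace ℂ (Fin P.d)) :
    ⟪P.Q u, w⟫ = ⟪u, w⟫ := by
  rw [Q_apply, inner_sub_left, hw _ (Submodule.orthogonalProjectionOnto P.freeSpan u).2, sub_zero]

lemma freeSpan_inner_zero {x : Fin n → Bool} {w : EuclideanSpace ℂ (Fin P.d)}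
    (hw : ∀ i, P.avail x i → ⟪P.input i, w⟫ = 0) :
    ∀ v ∈ P.freeSpan, ⟪v, w⟫ = 0 := by
  intro v hv
  induction hv using Submodule.span_induction with
  | mem v hv => obtain ⟨i, rfl⟩ := hv; exact hw i (Or.inl i.2)
  | zero => simp
  | add u v _ _ hu hv => rw [inner_add_left, hu, hv, add_zero]
  | smul c v _ hv => rw [inner_smul_left, hv, mul_zero]

def sIdx : Type := {i : Fin P.m // P.label i ≠ none}

instance : Fintype P.sIdx := inferInstanceAs (Fintype {i : Fin P.m // P.label i ≠ none})

def emb (k : Fin (Fintype.card P.sIdx)) : Fin P.m := ((Fintype.equivFin P.sIdx).symm k : P.sIdx).1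

lemma emb_label (k : Fin (Fintype.card P.sIdx)) : P.label (P.emb k) ≠ none :=
  ((Fintype.equivFin P.sIdx).symm k).2

lemma emb_inv {i : Fin P.m} (h : P.label i ≠ none) :
    P.emb (Fintype.equivFin P.sIdx ⟨i, h⟩) = i := by
  exact congrArg Subtype.val ((Fintype.equivFin P.sIdx).symm_apply_apply ⟨i, h⟩)

lemma sum_pred {M : Type*} [AddCommMonoid M] {p : Fin P.m → Prop} [DecidablePred p]
    (f : Fin P.m → M) (hf : ∀ i, ¬ p i → f i = 0) :
    ∑ i : {i : Fin P.m // p i}, f i.1 = ∑ i, f i := by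
  rw [← Finset.sum_subtype (Finset.univ.filter p) (by simp) f,
    Finset.sum_filter_of_ne (fun i _ hfi => by_contra fun hp => hfi (hf i hp))]

lemma sum_strict {M : Type*} [AddCommMonoid M] (f : Fin P.m → M)
    (hf : ∀ i, P.label i = none → f i = 0) :
    ∑ k : Fin (Fintype.card P.sIdx), f (P.emb k) = ∑ i, f i := by
  rw [show (∑ k : Fin (Fintype.card P.sIdx), f (P.emb k))
      = ∑ i : P.sIdx, f i.1 from Equiv.sum_comp (Fintype.equivFin P.sIdx).symm fun i : P.sIdx => f i.1]
  exact P.sum_pred f fun i hi => hf i (not_not.mp hi)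

/-- The strict span program obtained from `P` by dropping the free vectors and projecting
everything onto the orthogonal complement of their span. -/
@[reducible] def strictify : SpanProgram n where
  d := P.d
  m := Fintype.card P.sIdx
  label := fun k => P.label (P.emb k)
  target := P.Q P.target
  input := fun k => P.Q (P.input (P.emb k))

lemma strict_avail (x : Fin n → Bool) (k : Fin P.strictify.m) :
    P.strictify.avail x k ↔ P.avail x (P.emb k) := Iff.rfl

lemma strict_cw (s : Fin n → ℝ) (k : Fin P.strictify.m) :
    P.strictify.cw s k = P.cw s (P.emb k) := rfl

lemma cw_free {s : Fin n → ℝ} {i : Fin P.m} (h : P.label i = none) : P.cw s i = 0 := by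
  simp [cw, h]


lemma cost_strict (s : Fin n → ℝ) (g : Fin P.m → ℝ) :
    ∑ k, P.strictify.cw s k * g (P.emb k) = ∑ i, P.cw s i * g i :=
  P.sum_strict (fun i => P.cw s i * g i) (fun i h => by show P.cw s i * g i = 0; rw [P.cw_free h, zero_mul])

lemma true_forward (x : Fin n → Bool) (w : Fin P.m → ℂ)
    (hw : ∑ i, (if P.avail x i then w i else 0) • P.input i = P.target) :
    ∑ k, (if P.strictify.avail x k then w (P.emb k) else 0) • P.strictify.input k
      = P.strictify.target := by
  have e1 : ∀ k : Fin P.strictify.m,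
      (if P.strictify.avail x k then w (P.emb k) else 0) • P.strictify.input k
      = (if P.avail x (P.emb k) then w (P.emb k) else 0) • P.Q (P.input (P.emb k)) := fun k =>
    congrArg (· • _) (if_congr Iff.rfl rfl rfl)
  rw [Finset.sum_congr rfl fun k _ => e1 k]
  rw [show (∑ k : Fin P.strictify.m, (if P.avail x (P.emb k) then w (P.emb k) else 0) • P.Q (P.input (P.emb k)))
      = ∑ i, (if P.avail x i then w i else 0) • P.Q (P.input i) from
    P.sum_strict (fun i => (if P.avail x i then w i else 0) • P.Q (P.input i))
      (fun i h => by show (if P.avail x i then w i else 0) • P.Q (P.input i) = 0; rw [P.Q_free h, smul_zero])]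
  show ∑ i, (if P.avail x i then w i else 0) • P.Q (P.input i) = P.Q P.target
  rw [← hw, map_sum]
  exact Finset.sum_congr rfl fun i _ => (map_smul _ _ _).symm

lemma true_backward (x : Fin n → Bool) (c : Fin P.strictify.m → ℂ)
    (hc : ∑ k, (if P.strictify.avail x k then c k else 0) • P.strictify.input k
      = P.strictify.target) :
    ∃ w : Fin P.m → ℂ, (∑ i, (if P.avail x i then w i else 0) • P.input i = P.target) ∧
      ∀ s : Fin n → ℝ, ∑ i, P.cw s i * ‖w i‖ ^ 2 = ∑ k, P.strictify.cw s k * ‖c k‖ ^ 2 := by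
  classical
  set u : Fin P.m → ℂ :=
    fun i => if h : P.label i ≠ none then c (Fintype.equivFin P.sIdx ⟨i, h⟩) else 0 with hu
  have hue : ∀ k, u (P.emb k) = c k := by
    intro k
    have h := P.emb_label k
    rw [hu]; dsimp only; rw [dif_pos h]
    congr 1
    have : (⟨P.emb k, h⟩ : P.sIdx) = (Fintype.equivFin P.sIdx).symm k := rfl
    rw [this, Equiv.apply_symm_apply]
  have hu0 : ∀ i, P.label i = none → u i = 0 := fun i h => dif_neg (not_not.mpr h)
  set A := ∑ i, (if P.avail x i then u i else 0) • P.input i with hA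
  have hQA : P.Q A = P.Q P.target := by
    rw [hA, map_sum]
    rw [Finset.sum_congr rfl (fun i _ => (map_smul P.Q _ (P.input i) : _))]
    rw [← P.sum_strict (fun i => (if P.avail x i then u i else 0) • P.Q (P.input i))
      (fun i h => by show (if P.avail x i then u i else 0) • P.Q (P.input i) = 0; rw [P.Q_free h, smul_zero])]
    rw [show P.Q P.target = P.strictify.target from rfl, ← hc]
    refine Finset.sum_congr rfl fun k _ => ?_
    rw [hue k]
    rfl
  have hmem : P.target - A ∈ P.freeSpan :=
    P.mem_of_Q_eq_zero (by rw [map_sub, hQA, sub_self])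
  obtain ⟨c', hc'⟩ := (Submodule.mem_span_range_iff_exists_fun ℂ).mp hmem
  refine ⟨fun i => if h : P.label i = none then c' ⟨i, h⟩ else u i, ?_, ?_⟩
  · have key : ∀ i, (if P.avail x i then
        (if h : P.label i = none then c' ⟨i, h⟩ else u i) else 0) • P.input i
        = (if P.avail x i then u i else 0) • P.input i
          + (if h : P.label i = none then c' ⟨i, h⟩ else 0) • P.input i := by
      intro i; by_cases h : P.label i = none
      · have hav : P.avail x i := Or.inl h
        rw [dif_pos h, dif_pos h, if_pos hav, if_pos hav, hu0 i h, zero_smul, zero_add]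
      · rw [dif_neg h, dif_neg h, zero_smul, add_zero]
    rw [Finset.sum_congr rfl fun i _ => key i, Finset.sum_add_distrib]
    have h2 : ∑ i, (if h : P.label i = none then c' ⟨i, h⟩ else 0) • P.input i
        = P.target - A := by
      rw [← P.sum_pred (p := fun i => P.label i = none)
        (fun i => (if h : P.label i = none then c' ⟨i, h⟩ else 0) • P.input i)
        (fun i h => by show (if h : P.label i = none then c' ⟨i, h⟩ else 0) • P.input i = 0; rw [dif_neg h, zero_smul]), ← hc']
      exact Finset.sum_congr rfl fun j _ => by rw [dif_pos j.2]
    rw [h2, ← hA]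
    abel
  · intro s
    have := P.cost_strict s (fun i => ‖if h : P.label i = none then c' ⟨i, h⟩ else u i‖ ^ 2)
    rw [← this]
    refine Finset.sum_congr rfl fun k _ => ?_
    rw [dif_neg (P.emb_label k), hue k]

lemma false_forward (x : Fin n → Bool) (w' : EuclideanSpace ℂ (Fin P.d))
    (h1 : ⟪P.target, w'⟫ = 1) (h2 : ∀ i, P.avail x i → ⟪P.input i, w'⟫ = 0) :
    ⟪P.strictify.target, w'⟫ = 1 ∧
    (∀ k, P.strictify.avail x k → ⟪P.strictify.input k, w'⟫ = 0) ∧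
    ∀ s : Fin n → ℝ, ∑ k, P.strictify.cw s k * ‖⟪P.strictify.input k, w'⟫‖ ^ 2
      = ∑ i, P.cw s i * ‖⟪P.input i, w'⟫‖ ^ 2 := by
  have hK := P.freeSpan_inner_zero h2
  have hQ : ∀ u, ⟪P.Q u, w'⟫ = ⟪u, w'⟫ := P.inner_Q_left hK
  refine ⟨by rw [show P.strictify.target = P.Q P.target from rfl, hQ, h1],
    fun k hk => by
      rw [show P.strictify.input k = P.Q (P.input (P.emb k)) from rfl, hQ]
      exact h2 _ hk,
    fun s => ?_⟩
  rw [← P.cost_strict s (fun i => ‖⟪P.input i, w'⟫‖ ^ 2)]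
  refine Finset.sum_congr rfl fun k _ => ?_
  rw [show P.strictify.input k = P.Q (P.input (P.emb k)) from rfl, hQ]

lemma false_backward (x : Fin n → Bool) (w' : EuclideanSpace ℂ (Fin P.d))
    (h1 : ⟪P.strictify.target, w'⟫ = 1)
    (h2 : ∀ k, P.strictify.avail x k → ⟪P.strictify.input k, w'⟫ = 0) :
    ∃ w'' : EuclideanSpace ℂ (Fin P.d), ⟪P.target, w''⟫ = 1 ∧
      (∀ i, P.avail x i → ⟪P.input i, w''⟫ = 0) ∧
      ∀ s : Fin n → ℝ, ∑ i, P.cw s i * ‖⟪P.input i, w''⟫‖ ^ 2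
        = ∑ k, P.strictify.cw s k * ‖⟪P.strictify.input k, w'⟫‖ ^ 2 := by
  refine ⟨P.Q w', ?_, ?_, ?_⟩
  · rw [← P.inner_Q]; exact h1
  · intro i hi
    rw [← P.inner_Q]
    rcases hi with h | h
    · rw [P.Q_free h, inner_zero_left]
    · obtain ⟨j, hj⟩ := h
      have hne : P.label i ≠ none := by rw [hj]; exact Option.some_ne_none _
      have hek : P.emb (Fintype.equivFin P.sIdx ⟨i, hne⟩) = i := P.emb_inv hne
      have havail : P.strictify.avail x (Fintype.equivFin P.sIdx ⟨i, hne⟩) := by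
        rw [P.strict_avail, hek]; exact Or.inr ⟨j, hj⟩
      have h0 := h2 _ havail
      rw [show P.strictify.input (Fintype.equivFin P.sIdx ⟨i, hne⟩)
        = P.Q (P.input (P.emb (Fintype.equivFin P.sIdx ⟨i, hne⟩))) from rfl, hek] at h0
      exact h0
  · intro s
    rw [← P.cost_strict s (fun i => ‖⟪P.input i, P.Q w'⟫‖ ^ 2)]
    refine Finset.sum_congr rfl fun k _ => ?_
    rw [show P.strictify.input k = P.Q (P.input (P.emb k)) from rfl, P.inner_Q]

end Aux

end SpanProgram

/-- Every span program is equivalent to a strict one (no free input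
vectors), computing the same function with identical witness sizes for all inputs and all
cost vectors. -/
theorem spanProgram_strict_exists (n : ℕ) (P : SpanProgram n) :
    ∃ P' : SpanProgram n,
      (∀ i : Fin P'.m, P'.label i ≠ none) ∧
      (∀ x : Fin n → Bool, (P'.eval x ↔ P.eval x)) ∧
      ∀ (s : Fin n → ℝ), (∀ j, 0 ≤ s j) →
        ∀ x : Fin n → Bool, P'.wsizex s x = P.wsizex s x := by
  have hiff : ∀ x, P.strictify.eval x ↔ P.eval x := by
    intro x
    constructor
    · rintro ⟨c, hc⟩
      obtain ⟨w, hw, -⟩ := P.true_backward x c hc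
      exact ⟨w, hw⟩
    · rintro ⟨w, hw⟩
      exact ⟨fun k => w (P.emb k), P.true_forward x w hw⟩
  refine ⟨P.strictify, P.emb_label, hiff, fun s hs x => ?_⟩
  unfold SpanProgram.wsizex
  by_cases hx : P.eval x
  · rw [if_pos ((hiff x).mpr hx), if_pos hx]
    congr 1
    ext r
    constructor
    · rintro ⟨c, hc, rfl⟩
      obtain ⟨w, hw, hcost⟩ := P.true_backward x c hc
      exact ⟨w, hw, (hcost s).symm⟩
    · rintro ⟨w, hw, rfl⟩
      exact ⟨fun k => w (P.emb k), P.true_forward x w hw,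
        (P.cost_strict s (fun i => ‖w i‖ ^ 2)).symm⟩
  · rw [if_neg (fun h => hx ((hiff x).mp h)), if_neg hx]
    congr 1
    ext r
    constructor
    · rintro ⟨w', h1, h2, rfl⟩
      obtain ⟨w'', g1, g2, g3⟩ := P.false_backward x w' h1 h2
      exact ⟨w'', g1, g2, (g3 s).symm⟩
    · rintro ⟨w', h1, h2, rfl⟩
      obtain ⟨g1, g2, g3⟩ := P.false_forward x w' h1 h2
      exact ⟨w', g1, g2, (g3 s).symm⟩
end
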